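/- arXiv:1609.09565 — 4 statements merged into one kernel-verified Lean document; each statement's English description precedes it below -/
import Mathlib

section
/- Consider the SIRS nonlinear map F on D = {(P_R, P_I) ∈ [0,1]^n × [0,1]^n : P_R + P_I ⪯ 1_n} and the linear map (P_R, P_I) ↦ M·(P_R, P_I) with M the block matrix [[(1−γ)I_n, δI_n], [0_{n×n}, (1−δ)I_n + βA]]. If βλmax(A)/δ < 1, then the origin (P_R, P_I) = (0_n, 0_n) is a globally stable fixed point of both maps: for every initial point in D (respectively in ℝ^{2n} for the linear map) the iterates converge to the origin. -/
open Matrix Finset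

section Aux

open Filter

variable {n : ℕ}

/-- Weierstrass product inequality. -/
lemma aux_prod_one_sub {ι : Type*} (s : Finset ι) (a : ι → ℝ)
    (h0 : ∀ i ∈ s, 0 ≤ a i) (h1 : ∀ i ∈ s, a i ≤ 1) :
    1 - ∑ i ∈ s, a i ≤ ∏ i ∈ s, (1 - a i) := by
  classical
  induction s using Finset.induction with
  | empty => simp
  | insert _ _ hx ih =>
    rename_i x s
    rw [Finset.prod_insert hx, Finset.sum_insert hx]
    have hs0 : (0:ℝ) ≤ ∑ i ∈ s, a i :=
      Finset.sum_nonneg fun i hi => h0 i (Finset.mem_insert_of_mem hi)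
    have hax0 := h0 x (Finset.mem_insert_self x s)
    have hax1 := h1 x (Finset.mem_insert_self x s)
    have ihs := ih (fun i hi => h0 i (Finset.mem_insert_of_mem hi))
      (fun i hi => h1 i (Finset.mem_insert_of_mem hi))
    nlinarith [mul_le_mul_of_nonneg_left ihs (by linarith : (0:ℝ) ≤ 1 - a x)]

/-- Scalar input-to-state recursion: if `|a (t+1)| ≤ r |a t| + u t` with `0 ≤ r < 1`
and `u → 0`, then `a → 0`. -/
lemma aux_rec {r : ℝ} (hr0 : 0 ≤ r) (hr1 : r < 1) {a u : ℕ → ℝ}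
    (hrec : ∀ t, |a (t + 1)| ≤ r * |a t| + u t)
    (hu : Tendsto u atTop (nhds 0)) :
    Tendsto a atTop (nhds 0) := by
  rw [NormedAddCommGroup.tendsto_nhds_zero]
  intro ε hε
  have hε4 : 0 < (1 - r) * ε / 4 := by nlinarith
  obtain ⟨T, hT⟩ := Filter.eventually_atTop.mp
    (NormedAddCommGroup.tendsto_nhds_zero.mp hu ((1 - r) * ε / 4) hε4)
  have key : ∀ k, |a (T + k)| ≤ r ^ k * |a T| + ε / 2 := by
    intro k
    induction k with
    | zero => simp; linarith [abs_nonneg (a T)]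
    | succ k ih =>
      have h1 : |a (T + k + 1)| ≤ r * |a (T + k)| + u (T + k) := hrec (T + k)
      have h2 : u (T + k) ≤ (1 - r) * ε / 4 := by
        have := hT (T + k) (Nat.le_add_right _ _)
        rw [Real.norm_eq_abs] at this
        exact (abs_le.mp this.le).2
      have h3 : r * |a (T + k)| ≤ r * (r ^ k * |a T| + ε / 2) :=
        mul_le_mul_of_nonneg_left ih hr0
      have h4 : |a (T + (k + 1))| ≤ r ^ (k + 1) * |a T| + (r * (ε / 2) + (1 - r) * ε / 4) := by
        rw [← Nat.add_assoc, pow_succ]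
        calc |a (T + k + 1)| ≤ r * (r ^ k * |a T| + ε / 2) + (1 - r) * ε / 4 := by linarith
          _ = r ^ k * r * |a T| + (r * (ε / 2) + (1 - r) * ε / 4) := by ring
      refine h4.trans ?_
      have : r * (ε / 2) + (1 - r) * ε / 4 ≤ ε / 2 := by nlinarith
      linarith
  have hpow : Tendsto (fun k => r ^ k * |a T|) atTop (nhds 0) := by
    simpa using (tendsto_pow_atTop_nhds_zero_of_abs_lt_one
      (by rw [abs_of_nonneg hr0]; exact hr1)).mul_const (|a T|)
  obtain ⟨K, hK⟩ := Filter.eventually_atTop.mp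
    (NormedAddCommGroup.tendsto_nhds_zero.mp hpow (ε / 2) (by linarith))
  rw [Filter.eventually_atTop]
  refine ⟨T + K, fun t ht => ?_⟩
  have h1 : |a t| ≤ r ^ (t - T) * |a T| + ε / 2 := by
    have := key (t - T)
    rwa [Nat.add_sub_cancel' (le_trans (Nat.le_add_right _ _) ht)] at this
  have h2 : r ^ (t - T) * |a T| ≤ r ^ K * |a T| := by
    apply mul_le_mul_of_nonneg_right _ (abs_nonneg _)
    exact pow_le_pow_of_le_one hr0 hr1.le (by omega)
  have h3 : r ^ K * |a T| < ε / 2 := by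
    have := hK K le_rfl
    rwa [Real.norm_eq_abs, abs_of_nonneg (by positivity)] at this
  rw [Real.norm_eq_abs]
  linarith

lemma aux_repr {A : Matrix (Fin n) (Fin n) ℝ} (hA : A.IsHermitian) (y : Fin n → ℝ) :
    ∃ c : Fin n → ℝ, y = ∑ j, c j • (hA.eigenvectorBasis j : Fin n → ℝ) := by
  refine ⟨fun j => hA.eigenvectorBasis.repr (WithLp.toLp 2 y) j, ?_⟩
  have h := (hA.eigenvectorBasis.sum_repr (WithLp.toLp 2 y)).symm
  funext i
  have := congrFun (congrArg (WithLp.equiv 2 (Fin n → ℝ)) h) i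
  simpa using this

lemma aux_ortho {A : Matrix (Fin n) (Fin n) ℝ} (hA : A.IsHermitian) (j k : Fin n) :
    (hA.eigenvectorBasis j : Fin n → ℝ) ⬝ᵥ (hA.eigenvectorBasis k : Fin n → ℝ)
      = if j = k then 1 else 0 := by
  have h := orthonormal_iff_ite.mp hA.eigenvectorBasis.orthonormal j k
  simpa [PiLp.inner_apply, RCLike.inner_apply, dotProduct, mul_comm] using h

lemma aux_dot (c d : Fin n → ℝ) (v : Fin n → Fin n → ℝ)
    (ho : ∀ j k, v j ⬝ᵥ v k = if j = k then 1 else 0) :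
    (∑ j, c j • v j) ⬝ᵥ (∑ k, d k • v k) = ∑ j, c j * d j := by
  have expand : (∑ j, c j • v j) ⬝ᵥ (∑ k, d k • v k)
      = ∑ j, ∑ k, (c k * d j) * (v k ⬝ᵥ v j) := by
    simp only [dotProduct, Finset.sum_apply, Pi.smul_apply, smul_eq_mul,
      Finset.sum_mul, Finset.mul_sum]
    rw [Finset.sum_comm]
    refine Finset.sum_congr rfl fun j _ => ?_
    rw [Finset.sum_comm]
    exact Finset.sum_congr rfl fun k _ => Finset.sum_congr rfl fun i _ => by ring
  rw [expand]
  simp [ho, mul_ite]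

lemma aux_rayleigh {A : Matrix (Fin n) (Fin n) ℝ} (hA : A.IsHermitian) (x : Fin n → ℝ) :
    x ⬝ᵥ (A *ᵥ x) ≤ sSup (spectrum ℝ A) * (x ⬝ᵥ x) := by
  have hbdd : BddAbove (spectrum ℝ A) := (A.finite_spectrum).bddAbove
  have hle : ∀ k, hA.eigenvalues k ≤ sSup (spectrum ℝ A) :=
    fun k => le_csSup hbdd (hA.eigenvalues_mem_spectrum_real k)
  obtain ⟨c, hx⟩ := aux_repr hA x
  set v : Fin n → (Fin n → ℝ) := fun j => (hA.eigenvectorBasis j : Fin n → ℝ) with hv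
  have hAv : ∀ k, A *ᵥ v k = hA.eigenvalues k • v k := fun k => hA.mulVec_eigenvectorBasis k
  have hAx : A *ᵥ x = ∑ k, (c k * hA.eigenvalues k) • v k := by
    conv_lhs => rw [hx, ← Matrix.mulVecLin_apply, map_sum]
    refine Finset.sum_congr rfl fun k _ => ?_
    rw [LinearMap.map_smul, Matrix.mulVecLin_apply, hAv, smul_smul]
  have hdot : x ⬝ᵥ (A *ᵥ x) = ∑ j, hA.eigenvalues j * (c j)^2 := by
    rw [hAx]
    conv_lhs => rw [hx]
    rw [aux_dot c _ v (aux_ortho hA)]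
    exact Finset.sum_congr rfl fun j _ => by ring
  have hxx : x ⬝ᵥ x = ∑ j, (c j)^2 := by
    conv_lhs => rw [hx]
    rw [aux_dot c c v (aux_ortho hA)]
    exact Finset.sum_congr rfl fun j _ => by ring
  rw [hdot, hxx, Finset.mul_sum]
  exact Finset.sum_le_sum fun j _ => mul_le_mul_of_nonneg_right (hle j) (sq_nonneg _)

lemma aux_abs_eig {A : Matrix (Fin n) (Fin n) ℝ} (hA : A.IsHermitian)
    (hpos : ∀ i j, 0 ≤ A i j) (j : Fin n) :
    |hA.eigenvalues j| ≤ sSup (spectrum ℝ A) := by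
  set v : Fin n → ℝ := (hA.eigenvectorBasis j : Fin n → ℝ) with hv
  have hunit : v ⬝ᵥ v = 1 := by simpa using aux_ortho hA j j
  have hAv : A *ᵥ v = hA.eigenvalues j • v := hA.mulVec_eigenvectorBasis j
  have hmu : v ⬝ᵥ (A *ᵥ v) = hA.eigenvalues j := by
    rw [hAv, dotProduct_smul, smul_eq_mul, hunit, mul_one]
  set w : Fin n → ℝ := fun i => |v i| with hw
  have hww : w ⬝ᵥ w = 1 := by
    rw [← hunit]
    exact Finset.sum_congr rfl fun i _ => by simp [hw, abs_mul_abs_self]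
  have hsum : ∀ (x : Fin n → ℝ) i, (A *ᵥ x) i = ∑ k, A i k * x k := fun x i => rfl
  have habs : |v ⬝ᵥ (A *ᵥ v)| ≤ w ⬝ᵥ (A *ᵥ w) := by
    calc |v ⬝ᵥ (A *ᵥ v)| ≤ ∑ i, |v i * (A *ᵥ v) i| := Finset.abs_sum_le_sum_abs _ _
      _ ≤ w ⬝ᵥ (A *ᵥ w) := by
          refine Finset.sum_le_sum fun i _ => ?_
          rw [abs_mul]
          refine mul_le_mul_of_nonneg_left ?_ (abs_nonneg _)
          calc |(A *ᵥ v) i| = |∑ k, A i k * v k| := by rw [hsum]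
            _ ≤ ∑ k, |A i k * v k| := Finset.abs_sum_le_sum_abs _ _
            _ = (A *ᵥ w) i := by
                rw [hsum]
                exact Finset.sum_congr rfl fun k _ => by
                  rw [abs_mul, abs_of_nonneg (hpos i k)]
  have hfin := habs.trans ((aux_rayleigh hA w).trans_eq (by rw [hww, mul_one]))
  rw [hmu] at hfin
  exact hfin

/-- Coordinatewise convergence of matrix powers given a full eigenbasis with
eigenvalues of modulus `< 1`. -/
lemma aux_pow_tendsto {B : Matrix (Fin n) (Fin n) ℝ} {v : Fin n → Fin n → ℝ} {r : Fin n → ℝ}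
    (hv : ∀ j, B *ᵥ v j = r j • v j) (hr : ∀ j, |r j| < 1)
    (hrepr : ∀ y : Fin n → ℝ, ∃ c : Fin n → ℝ, y = ∑ j, c j • v j)
    (y : Fin n → ℝ) (i : Fin n) :
    Tendsto (fun t => ((B ^ t) *ᵥ y) i) atTop (nhds 0) := by
  obtain ⟨c, hy⟩ := hrepr y
  have hpowv : ∀ t j, (B ^ t) *ᵥ v j = (r j ^ t) • v j := by
    intro t j
    induction t with
    | zero => simp
    | succ t ih =>
      rw [pow_succ', ← Matrix.mulVec_mulVec, ih, Matrix.mulVec_smul, hv, smul_smul, pow_succ', mul_comm]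
  have hform : ∀ t, ((B ^ t) *ᵥ y) i = ∑ j, (c j * v j i) * r j ^ t := by
    intro t
    conv_lhs => rw [hy, ← Matrix.mulVecLin_apply, map_sum]
    rw [Finset.sum_apply]
    refine Finset.sum_congr rfl fun j _ => ?_
    rw [LinearMap.map_smul, Matrix.mulVecLin_apply, hpowv]
    simp [smul_smul]
    ring
  simp only [hform]
  have : Tendsto (fun t => ∑ j, (c j * v j i) * r j ^ t) atTop (nhds (∑ j : Fin n, 0)) := by
    refine tendsto_finset_sum _ fun j _ => ?_
    simpa using (tendsto_pow_atTop_nhds_zero_of_abs_lt_one (hr j)).const_mul (c j * v j i)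
  simpa using this

end Aux

/-- The largest eigenvalue of a (symmetric) real matrix, as the supremum of its real spectrum. -/
noncomputable def lamMax {n : ℕ} (M : Matrix (Fin n) (Fin n) ℝ) : ℝ :=
  sSup (spectrum ℝ M)

/-- The domain `D = {(P_R, P_I) ∈ [0,1]^n × [0,1]^n : P_R + P_I ⪯ 1}`. -/
def sirsD (n : ℕ) : Set ((Fin n → ℝ) × (Fin n → ℝ)) :=
  {p | p.1 ∈ Set.Icc (0 : Fin n → ℝ) 1 ∧ p.2 ∈ Set.Icc (0 : Fin n → ℝ) 1 ∧
    ∀ i, p.1 i + p.2 i ≤ 1}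

/-- The SIRS nonlinear (mean-field) map `F(P_R, P_I)`:
`P_R,i′ = (1−γ)P_R,i + δ P_I,i` and
`P_I,i′ = (1−δ)P_I,i + (1 − ∏_{j∈N_i}(1−β P_I,j))(1 − P_R,i − P_I,i)`. -/
noncomputable def sirsF {n : ℕ} (G : SimpleGraph (Fin n)) [DecidableRel G.Adj]
    (β δ γ : ℝ) (p : (Fin n → ℝ) × (Fin n → ℝ)) : (Fin n → ℝ) × (Fin n → ℝ) :=
  (fun i => (1 - γ) * p.1 i + δ * p.2 i,
   fun i => (1 - δ) * p.2 i +
     (1 - ∏ j ∈ G.neighborFinset i, (1 - β * p.2 j)) * (1 - p.1 i - p.2 i))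

/-- The SIRS linear map `(P_R, P_I) ↦ M (P_R, P_I)` with
`M = [[(1−γ)I, δI], [0, (1−δ)I + βA]]`. -/
noncomputable def sirsL {n : ℕ} (G : SimpleGraph (Fin n)) [DecidableRel G.Adj]
    (β δ γ : ℝ) (p : (Fin n → ℝ) × (Fin n → ℝ)) : (Fin n → ℝ) × (Fin n → ℝ) :=
  (fun i => (1 - γ) * p.1 i + δ * p.2 i,
   fun i => (1 - δ) * p.2 i + β * ((G.adjMatrix ℝ) *ᵥ p.2) i)

set_option maxHeartbeats 1000000 in
/-- If `β λmax(A)/δ < 1` then the origin is a globally stable fixed point of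
both the SIRS nonlinear map (on `D`) and the SIRS linear map (on all of `ℝ^{2n}`). -/
theorem stmt12 {n : ℕ} (hn : 1 ≤ n) (G : SimpleGraph (Fin n)) [DecidableRel G.Adj]
    (hG : G.Connected) (β δ γ : ℝ) (hβ : β ∈ Set.Ioo (0 : ℝ) 1)
    (hδ : δ ∈ Set.Ioo (0 : ℝ) 1) (hγ : γ ∈ Set.Ioo (0 : ℝ) 1)
    (h : β * lamMax (G.adjMatrix ℝ) / δ < 1) :
    sirsF G β δ γ 0 = 0 ∧ sirsL G β δ γ 0 = 0 ∧
    (∀ p ∈ sirsD n,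
      Filter.Tendsto (fun t => (sirsF G β δ γ)^[t] p) Filter.atTop (nhds 0)) ∧
    (∀ p : (Fin n → ℝ) × (Fin n → ℝ),
      Filter.Tendsto (fun t => (sirsL G β δ γ)^[t] p) Filter.atTop (nhds 0)) := by
  obtain ⟨hβ0, hβ1⟩ := hβ
  obtain ⟨hδ0, hδ1⟩ := hδ
  obtain ⟨hγ0, hγ1⟩ := hγ
  set A := G.adjMatrix ℝ with hAdef
  have hA : A.IsHermitian := by
    rw [Matrix.IsHermitian, conjTranspose_eq_transpose_of_trivial]
    exact G.isSymm_adjMatrix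
  have hApos : ∀ i j, 0 ≤ A i j := by
    intro i j
    rw [hAdef, SimpleGraph.adjMatrix_apply]
    split <;> norm_num
  have hβΛ : β * lamMax A < δ := by
    have := (div_lt_one hδ0).mp h
    linarith
  have hmu : ∀ j, |hA.eigenvalues j| ≤ lamMax A := aux_abs_eig hA hApos
  set B : Matrix (Fin n) (Fin n) ℝ := (1 - δ) • (1 : Matrix (Fin n) (Fin n) ℝ) + β • A
    with hBdef
  have hBv : ∀ (x : Fin n → ℝ) i, (B *ᵥ x) i = (1 - δ) * x i + β * (A *ᵥ x) i := by
    intro x i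
    rw [hBdef, Matrix.add_mulVec, Matrix.smul_mulVec, Matrix.smul_mulVec,
      Matrix.one_mulVec]
    simp
  have hAv : ∀ j, A *ᵥ (hA.eigenvectorBasis j : Fin n → ℝ)
      = hA.eigenvalues j • (hA.eigenvectorBasis j : Fin n → ℝ) :=
    fun j => hA.mulVec_eigenvectorBasis j
  have hvB : ∀ j, B *ᵥ (hA.eigenvectorBasis j : Fin n → ℝ)
      = (1 - δ + β * hA.eigenvalues j) • (hA.eigenvectorBasis j : Fin n → ℝ) := by
    intro j
    rw [hBdef, Matrix.add_mulVec, Matrix.smul_mulVec, Matrix.smul_mulVec,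
      Matrix.one_mulVec, hAv j, smul_smul, ← add_smul]
  have hrlt : ∀ j, |1 - δ + β * hA.eigenvalues j| < 1 := by
    intro j
    have h1 := (abs_le.mp (hmu j)).1
    have h2 := (abs_le.mp (hmu j)).2
    rw [abs_lt]
    constructor
    · nlinarith
    · nlinarith
  have hkey : ∀ (y : Fin n → ℝ) (i : Fin n),
      Filter.Tendsto (fun t => ((B ^ t) *ᵥ y) i) Filter.atTop (nhds 0) :=
    aux_pow_tendsto hvB hrlt (aux_repr hA)
  have hBpos : ∀ i k, 0 ≤ B i k := by
    intro i k
    rw [hBdef]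
    simp only [Matrix.add_apply, Matrix.smul_apply, Matrix.one_apply, smul_eq_mul]
    have := hApos i k
    split <;> nlinarith
  have hBmono : ∀ (x y : Fin n → ℝ), (∀ i, x i ≤ y i) → ∀ i, (B *ᵥ x) i ≤ (B *ᵥ y) i := by
    intro x y hxy i
    have e : ∀ z : Fin n → ℝ, (B *ᵥ z) i = ∑ k, B i k * z k := fun z => rfl
    rw [e, e]
    exact Finset.sum_le_sum fun k _ => mul_le_mul_of_nonneg_left (hxy k) (hBpos i k)
  -- fixed point claims
  refine ⟨?_, ?_, ?_, ?_⟩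
  · refine Prod.ext ?_ ?_ <;> funext i <;> simp [sirsF]
  · refine Prod.ext ?_ ?_ <;> funext i <;> simp [sirsL]
  · -- nonlinear convergence
    intro p hp
    set Fm := sirsF G β δ γ with hFm
    have hD : ∀ q ∈ sirsD n, Fm q ∈ sirsD n := by
      intro q hq
      obtain ⟨⟨hq1l0, hq1u0⟩, ⟨hq2l0, hq2u0⟩, hsum⟩ := hq
      have hq1l : ∀ i, (0:ℝ) ≤ q.1 i := fun i => by simpa using hq1l0 i
      have hq1u : ∀ i, q.1 i ≤ 1 := fun i => by simpa using hq1u0 i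
      have hq2l : ∀ i, (0:ℝ) ≤ q.2 i := fun i => by simpa using hq2l0 i
      have hq2u : ∀ i, q.2 i ≤ 1 := fun i => by simpa using hq2u0 i
      have hfact : ∀ i, (0:ℝ) ≤ ∏ j ∈ G.neighborFinset i, (1 - β * q.2 j) ∧
          (∏ j ∈ G.neighborFinset i, (1 - β * q.2 j)) ≤ 1 := by
        intro i
        constructor
        · refine Finset.prod_nonneg fun j _ => ?_
          have := hq2u j
          have := hq2l j
          nlinarith
        · refine Finset.prod_le_one (fun j _ => ?_) (fun j _ => ?_)
          · have := hq2u j; have := hq2l j; nlinarith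
          · have := hq2l j; nlinarith
      have hrem : ∀ i, (0:ℝ) ≤ 1 - q.1 i - q.2 i := fun i => by linarith [hsum i]
      have h2l : ∀ i, (0:ℝ) ≤ (Fm q).2 i := by
        intro i
        have h1 := (hfact i).1
        have h2 := (hfact i).2
        have h3 := hrem i
        have := hq2l i
        simp only [hFm, sirsF]
        nlinarith
      have hsum' : ∀ i, (Fm q).1 i + (Fm q).2 i ≤ 1 := by
        intro i
        have h2 := (hfact i).1
        have h3 := hrem i
        have h4 := hq1l i
        have h5 := hq2l i
        have h6 := hsum i
        simp only [hFm, sirsF]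
        nlinarith
      have h1l : ∀ i, (0:ℝ) ≤ (Fm q).1 i := by
        intro i
        have := hq1l i; have := hq2l i
        simp only [hFm, sirsF]
        nlinarith
      refine ⟨⟨fun i => by simpa using h1l i, fun i => ?_⟩,
        ⟨fun i => by simpa using h2l i, fun i => ?_⟩, hsum'⟩
      · have h := hsum' i; have h' := h2l i
        simp only [Pi.one_apply]; linarith
      · have h := hsum' i; have h' := h1l i
        simp only [Pi.one_apply]; linarith
    have hdom : ∀ q ∈ sirsD n, ∀ i, (Fm q).2 i ≤ (B *ᵥ q.2) i := by
      intro q hq i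
      obtain ⟨⟨hq1l0, hq1u0⟩, ⟨hq2l0, hq2u0⟩, hsum⟩ := hq
      have hq1l : ∀ i, (0:ℝ) ≤ q.1 i := fun i => by simpa using hq1l0 i
      have hq2l : ∀ i, (0:ℝ) ≤ q.2 i := fun i => by simpa using hq2l0 i
      have hq2u : ∀ i, q.2 i ≤ 1 := fun i => by simpa using hq2u0 i
      have hws : 1 - ∑ j ∈ G.neighborFinset i, β * q.2 j
          ≤ ∏ j ∈ G.neighborFinset i, (1 - β * q.2 j) := by
        refine aux_prod_one_sub _ _ (fun j _ => ?_) (fun j _ => ?_)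
        · have := hq2l j; nlinarith
        · have := hq2u j; nlinarith
      have hsumval : ∑ j ∈ G.neighborFinset i, β * q.2 j = β * (A *ᵥ q.2) i := by
        rw [hAdef, SimpleGraph.adjMatrix_mulVec_apply, Finset.mul_sum]
      have hrem : (0:ℝ) ≤ 1 - q.1 i - q.2 i := by linarith [hsum i]
      have hrem1 : 1 - q.1 i - q.2 i ≤ 1 := by
        have := hq1l i; have := hq2l i; linarith
      have hprodle : 1 - ∏ j ∈ G.neighborFinset i, (1 - β * q.2 j) ≤ β * (A *ᵥ q.2) i := by
        rw [← hsumval]; linarith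
      have hprodnn : 0 ≤ 1 - ∏ j ∈ G.neighborFinset i, (1 - β * q.2 j) := by
        have : (∏ j ∈ G.neighborFinset i, (1 - β * q.2 j)) ≤ 1 := by
          refine Finset.prod_le_one (fun j _ => ?_) (fun j _ => ?_)
          · have := hq2u j; nlinarith
          · have := hq2l j; nlinarith
        linarith
      rw [hBv]
      simp only [hFm, sirsF]
      nlinarith [mul_le_mul_of_nonneg_left hrem1 hprodnn,
        mul_le_mul_of_nonneg_right hprodle hrem]
    have hiter : ∀ t, Fm^[t] p ∈ sirsD n ∧ ∀ i, (Fm^[t] p).2 i ≤ ((B ^ t) *ᵥ p.2) i := by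
      intro t
      induction t with
      | zero => exact ⟨hp, fun i => by simp⟩
      | succ t ih =>
        obtain ⟨ihD, ihle⟩ := ih
        constructor
        · rw [Function.iterate_succ_apply']
          exact hD _ ihD
        · intro i
          rw [Function.iterate_succ_apply']
          calc (Fm (Fm^[t] p)).2 i ≤ (B *ᵥ (Fm^[t] p).2) i := hdom _ ihD i
            _ ≤ (B *ᵥ ((B ^ t) *ᵥ p.2)) i := hBmono _ _ ihle i
            _ = ((B ^ (t+1)) *ᵥ p.2) i := by
                rw [Matrix.mulVec_mulVec, ← pow_succ']
    have h2 : ∀ i, Filter.Tendsto (fun t => (Fm^[t] p).2 i) Filter.atTop (nhds 0) := by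
      intro i
      refine tendsto_of_tendsto_of_tendsto_of_le_of_le tendsto_const_nhds (hkey p.2 i)
        (fun t => ?_) (fun t => (hiter t).2 i)
      simpa using ((hiter t).1).2.1.1 i
    have h1 : ∀ i, Filter.Tendsto (fun t => (Fm^[t] p).1 i) Filter.atTop (nhds 0) := by
      intro i
      refine aux_rec (r := 1 - γ) (by linarith) (by linarith)
        (u := fun t => δ * |(Fm^[t] p).2 i|) (fun t => ?_) ?_
      · rw [Function.iterate_succ_apply']
        have : (Fm (Fm^[t] p)).1 i = (1 - γ) * (Fm^[t] p).1 i + δ * (Fm^[t] p).2 i := rfl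
        rw [this]
        calc |(1 - γ) * (Fm^[t] p).1 i + δ * (Fm^[t] p).2 i|
            ≤ |(1 - γ) * (Fm^[t] p).1 i| + |δ * (Fm^[t] p).2 i| := abs_add_le _ _
          _ ≤ (1 - γ) * |(Fm^[t] p).1 i| + δ * |(Fm^[t] p).2 i| := by
              rw [abs_mul, abs_mul, abs_of_nonneg (by linarith : (0:ℝ) ≤ 1 - γ),
                abs_of_nonneg hδ0.le]
      · simpa using ((h2 i).abs).const_mul δ
    have hh1 : Filter.Tendsto (fun t => (Fm^[t] p).1) Filter.atTop (nhds 0) := by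
      rw [tendsto_pi_nhds]; intro i; simpa using h1 i
    have hh2 : Filter.Tendsto (fun t => (Fm^[t] p).2) Filter.atTop (nhds 0) := by
      rw [tendsto_pi_nhds]; intro i; simpa using h2 i
    exact hh1.prodMk_nhds hh2
  · -- linear convergence
    intro p
    set L := sirsL G β δ γ with hL
    have hL2 : ∀ q : (Fin n → ℝ) × (Fin n → ℝ), (L q).2 = B *ᵥ q.2 := by
      intro q
      funext i
      rw [hBv]
      rfl
    have hLiter2 : ∀ t, (L^[t] p).2 = (B ^ t) *ᵥ p.2 := by
      intro t
      induction t with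
      | zero => simp
      | succ t ih =>
        rw [Function.iterate_succ_apply', hL2, ih, Matrix.mulVec_mulVec, ← pow_succ']
    have h2 : ∀ i, Filter.Tendsto (fun t => (L^[t] p).2 i) Filter.atTop (nhds 0) := by
      intro i
      simpa using (hkey p.2 i).congr (fun t => by rw [hLiter2 t])
    have h1 : ∀ i, Filter.Tendsto (fun t => (L^[t] p).1 i) Filter.atTop (nhds 0) := by
      intro i
      refine aux_rec (r := 1 - γ) (by linarith) (by linarith)
        (u := fun t => δ * |(L^[t] p).2 i|) (fun t => ?_) ?_
      · rw [Function.iterate_succ_apply']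
        have : (L (L^[t] p)).1 i = (1 - γ) * (L^[t] p).1 i + δ * (L^[t] p).2 i := rfl
        rw [this]
        calc |(1 - γ) * (L^[t] p).1 i + δ * (L^[t] p).2 i|
            ≤ |(1 - γ) * (L^[t] p).1 i| + |δ * (L^[t] p).2 i| := abs_add_le _ _
          _ ≤ (1 - γ) * |(L^[t] p).1 i| + δ * |(L^[t] p).2 i| := by
              rw [abs_mul, abs_mul, abs_of_nonneg (by linarith : (0:ℝ) ≤ 1 - γ),
                abs_of_nonneg hδ0.le]
      · simpa using ((h2 i).abs).const_mul δ
    have hh1 : Filter.Tendsto (fun t => (L^[t] p).1) Filter.atTop (nhds 0) := by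
      rw [tendsto_pi_nhds]; intro i; simpa using h1 i
    have hh2 : Filter.Tendsto (fun t => (L^[t] p).2) Filter.atTop (nhds 0) := by
      rw [tendsto_pi_nhds]; intro i; simpa using h2 i
    exact hh1.prodMk_nhds hh2
end

section
/- If βλmax(A)/δ > 1, then the SIRS nonlinear map F has exactly one fixed point (P_R*, P_I*) in D other than the origin; moreover this fixed point satisfies P_R* = (δ/γ)P_I* componentwise and all its entries are strictly positive. -/
open Matrix Finset

open Matrix Finset Pointwise in
lemma exists_perron {n : ℕ} (hn : 1 ≤ n) (G : SimpleGraph (Fin n)) [DecidableRel G.Adj]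
    (hG : G.Connected) :
    ∃ w : Fin n → ℝ, (∀ i, 0 ≤ w i) ∧ (∃ i, 0 < w i) ∧
      ∀ i, ∑ j ∈ G.neighborFinset i, w j = lamMax (G.adjMatrix ℝ) * w i := by
  haveI : Nonempty (Fin n) := ⟨⟨0, hn⟩⟩
  set A := G.adjMatrix ℝ with hAdef
  have hA : A.IsHermitian := by
    ext i j
    simp [hAdef, Matrix.conjTranspose_apply, SimpleGraph.adjMatrix_apply, SimpleGraph.adj_comm]
  have hspec : spectrum ℝ A = Set.range hA.eigenvalues := hA.spectrum_real_eq_range_eigenvalues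
  obtain ⟨i0, hi0⟩ := Finite.exists_max hA.eigenvalues
  set lam := lamMax A with hlamdef
  have hlam_eq : lam = hA.eigenvalues i0 := by
    rw [hlamdef]; unfold lamMax; rw [hspec]
    apply le_antisymm
    · exact csSup_le (Set.range_nonempty _) (by rintro x ⟨i, rfl⟩; exact hi0 i)
    · exact le_csSup (Set.finite_range _).bddAbove ⟨i0, rfl⟩
  -- the matrix lam•1 - A is positive semidefinite
  set B : Matrix (Fin n) (Fin n) ℝ := (algebraMap ℝ (Matrix (Fin n) (Fin n) ℝ)) lam - A with hBdef
  have hB : B.IsHermitian := by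
    have h1 : ((algebraMap ℝ (Matrix (Fin n) (Fin n) ℝ)) lam).IsHermitian := by
      rw [Matrix.IsHermitian, Algebra.algebraMap_eq_smul_one, Matrix.conjTranspose_smul,
        Matrix.conjTranspose_one, star_trivial]
    exact h1.sub hA
  have hBspec : spectrum ℝ B = {lam} - spectrum ℝ A := (spectrum.singleton_sub_eq A lam).symm
  have hBpos : B.PosSemidef := by
    apply hB.posSemidef_iff_eigenvalues_nonneg.mpr
    intro i
    have hmem : hB.eigenvalues i ∈ spectrum ℝ B := hB.eigenvalues_mem_spectrum_real i
    rw [hBspec] at hmem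
    obtain ⟨x, hx, μ, hμ, hxy⟩ := Set.mem_sub.mp hmem
    rw [Set.mem_singleton_iff] at hx
    subst hx
    rw [hspec] at hμ
    obtain ⟨j, rfl⟩ := hμ
    have := hi0 j
    rw [Pi.zero_apply, ← hxy]
    linarith [hlam_eq ▸ hi0 j]
  -- eigenvector for lam
  set v : Fin n → ℝ := ⇑(hA.eigenvectorBasis i0) with hvdef
  have hv : A *ᵥ v = lam • v := by
    rw [hlam_eq]; exact hA.mulVec_eigenvectorBasis i0
  have hvne : ∃ i, v i ≠ 0 := by
    by_contra hc
    push_neg at hc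
    have h0 : hA.eigenvectorBasis i0 = 0 := by
      ext i; exact hc i
    have := hA.eigenvectorBasis.orthonormal.1 i0
    rw [h0] at this; simp at this
  set w : Fin n → ℝ := fun i => |v i| with hwdef
  have hwA : w ⬝ᵥ (A *ᵥ w) ≥ v ⬝ᵥ (A *ᵥ v) := by
    unfold dotProduct Matrix.mulVec
    apply Finset.sum_le_sum
    intro i _
    unfold dotProduct
    rw [Finset.mul_sum, Finset.mul_sum]
    apply Finset.sum_le_sum
    intro j _
    have hAij : 0 ≤ A i j := by
      simp only [hAdef, SimpleGraph.adjMatrix_apply]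
      positivity
    have : v i * (A i j * v j) = A i j * (v i * v j) := by ring
    rw [this]
    have : w i * (A i j * w j) = A i j * (w i * w j) := by ring
    rw [this]
    apply mul_le_mul_of_nonneg_left _ hAij
    calc v i * v j ≤ |v i * v j| := le_abs_self _
      _ = w i * w j := by rw [hwdef]; exact abs_mul _ _
  have hvv : w ⬝ᵥ w = v ⬝ᵥ v := by
    unfold dotProduct
    apply Finset.sum_congr rfl
    intro i _
    simp [hwdef, abs_mul_abs_self]
  have hvAv : v ⬝ᵥ (A *ᵥ v) = lam * (v ⬝ᵥ v) := by
    rw [hv, dotProduct_smul, smul_eq_mul]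
  have hBw : B *ᵥ w = lam • w - A *ᵥ w := by
    rw [hBdef, Matrix.sub_mulVec, Algebra.algebraMap_eq_smul_one, Matrix.smul_mulVec,
      Matrix.one_mulVec]
  have hq0 : w ⬝ᵥ (B *ᵥ w) = 0 := by
    apply le_antisymm
    · rw [hBw, dotProduct_sub, dotProduct_smul, smul_eq_mul, hvv]
      linarith
    · have := hBpos.dotProduct_mulVec_nonneg w
      simpa using this
  have hABw : A *ᵥ w = lam • w := by
    have h0 : B *ᵥ w = 0 := by
      rw [← hBpos.dotProduct_mulVec_zero_iff w]
      simpa using hq0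
    rw [hBw] at h0
    exact (sub_eq_zero.mp h0).symm
  refine ⟨w, fun i => abs_nonneg _, ?_, fun i => ?_⟩
  · obtain ⟨i, hi⟩ := hvne
    exact ⟨i, abs_pos.mpr hi⟩
  · have h1 := congrFun hABw i
    rw [hAdef] at h1
    rw [← SimpleGraph.adjMatrix_mulVec_apply, h1]
    simp

-- spreading positivity on connected graphs
lemma spread_pos {n : ℕ} (G : SimpleGraph (Fin n)) (hG : G.Connected)
    (x : Fin n → ℝ) (hx0 : ∀ i, 0 ≤ x i) (hne : ∃ i, x i ≠ 0)
    (hz : ∀ i, x i = 0 → ∀ j, G.Adj i j → x j = 0) : ∀ i, 0 < x i := by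
  obtain ⟨i0, hi0⟩ := hne
  have hpos : ∀ {a b : Fin n} (w : G.Walk a b), 0 < x a → 0 < x b := by
    intro a b w
    induction w with
    | nil => exact id
    | cons hadj p ih =>
      intro ha
      apply ih
      rcases (hx0 _).lt_or_eq with hp | hp
      · exact hp
      · exfalso
        have := hz _ hp.symm _ hadj.symm
        linarith
  intro i
  obtain ⟨w⟩ := hG.preconnected i0 i
  exact hpos w (lt_of_le_of_ne (hx0 i0) (Ne.symm hi0))

/-- infection pressure -/
noncomputable def gfun {n : ℕ} (G : SimpleGraph (Fin n)) [DecidableRel G.Adj]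
    (β : ℝ) (x : Fin n → ℝ) (i : Fin n) : ℝ :=
  1 - ∏ j ∈ G.neighborFinset i, (1 - β * x j)

/-- one-variable response -/
noncomputable def Hfun {n : ℕ} (G : SimpleGraph (Fin n)) [DecidableRel G.Adj]
    (β δ c : ℝ) (x : Fin n → ℝ) (i : Fin n) : ℝ :=
  gfun G β x i / (δ + c * gfun G β x i)

section basic
variable {n : ℕ} (G : SimpleGraph (Fin n)) [DecidableRel G.Adj] {β δ c : ℝ}

lemma g_nonneg (hβ0 : 0 ≤ β) (hβ1 : β ≤ 1) {x : Fin n → ℝ} (hx0 : ∀ j, 0 ≤ x j)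
    (hx1 : ∀ j, x j ≤ 1) (i : Fin n) : 0 ≤ gfun G β x i := by
  unfold gfun
  have : ∏ j ∈ G.neighborFinset i, (1 - β * x j) ≤ 1 :=
    Finset.prod_le_one (fun j _ => by nlinarith [hx0 j, hx1 j])
      (fun j _ => by nlinarith [hx0 j, hβ0])
  linarith

lemma g_le_one (hβ0 : 0 ≤ β) (hβ1 : β ≤ 1) {x : Fin n → ℝ} (hx0 : ∀ j, 0 ≤ x j)
    (hx1 : ∀ j, x j ≤ 1) (i : Fin n) : gfun G β x i ≤ 1 := by
  unfold gfun
  have : (0:ℝ) ≤ ∏ j ∈ G.neighborFinset i, (1 - β * x j) :=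
    Finset.prod_nonneg (fun j _ => by nlinarith [hx0 j, hx1 j])
  linarith

lemma g_mono (hβ0 : 0 ≤ β) (hβ1 : β ≤ 1) {x y : Fin n → ℝ} (hx0 : ∀ j, 0 ≤ x j)
    (hxy : ∀ j, x j ≤ y j) (hy1 : ∀ j, y j ≤ 1) (i : Fin n) :
    gfun G β x i ≤ gfun G β y i := by
  unfold gfun
  have : ∏ j ∈ G.neighborFinset i, (1 - β * y j) ≤ ∏ j ∈ G.neighborFinset i, (1 - β * x j) :=
    Finset.prod_le_prod (fun j _ => by nlinarith [hy1 j]) (fun j _ => by nlinarith [hxy j])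
  linarith

lemma denom_pos (hδ : 0 < δ) (hc : 0 < c) {t : ℝ} (ht : 0 ≤ t) : 0 < δ + c * t := by positivity

lemma fmono (hδ : 0 < δ) (hc : 0 < c) {t u : ℝ} (ht : 0 ≤ t) (htu : t ≤ u) :
    t / (δ + c * t) ≤ u / (δ + c * u) := by
  rw [div_le_div_iff₀ (denom_pos hδ hc ht) (denom_pos hδ hc (le_trans ht htu))]
  nlinarith

lemma H_nonneg (hβ0 : 0 ≤ β) (hβ1 : β ≤ 1) (hδ : 0 < δ) (hc : 0 < c) {x : Fin n → ℝ}
    (hx0 : ∀ j, 0 ≤ x j) (hx1 : ∀ j, x j ≤ 1) (i : Fin n) : 0 ≤ Hfun G β δ c x i :=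
  div_nonneg (g_nonneg G hβ0 hβ1 hx0 hx1 i) (denom_pos hδ hc (g_nonneg G hβ0 hβ1 hx0 hx1 i)).le

lemma H_le_one (hβ0 : 0 ≤ β) (hβ1 : β ≤ 1) (hδ : 0 < δ) (hc : 1 ≤ c) {x : Fin n → ℝ}
    (hx0 : ∀ j, 0 ≤ x j) (hx1 : ∀ j, x j ≤ 1) (i : Fin n) : Hfun G β δ c x i ≤ 1 := by
  have hg0 := g_nonneg G hβ0 hβ1 hx0 hx1 i
  have hd := denom_pos hδ (by linarith : (0:ℝ) < c) hg0
  rw [Hfun, div_le_one hd]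
  nlinarith

lemma H_mono (hβ0 : 0 ≤ β) (hβ1 : β ≤ 1) (hδ : 0 < δ) (hc : 0 < c) {x y : Fin n → ℝ}
    (hx0 : ∀ j, 0 ≤ x j) (hxy : ∀ j, x j ≤ y j) (hy1 : ∀ j, y j ≤ 1) (i : Fin n) :
    Hfun G β δ c x i ≤ Hfun G β δ c y i := by
  have hx1 : ∀ j, x j ≤ 1 := fun j => le_trans (hxy j) (hy1 j)
  exact fmono hδ hc (g_nonneg G hβ0 hβ1 hx0 hx1 i) (g_mono G hβ0 hβ1 hx0 hxy hy1 i)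

end basic

-- concavity of products (proved earlier in c.lean, re-add here)
lemma prod_subhom {ι : Type*} (T : Finset ι) (a : ι → ℝ) (s : ℝ) (hs0 : 0 ≤ s) (hs1 : s ≤ 1)
    (ha : ∀ j ∈ T, 0 ≤ a j ∧ a j ≤ 1) :
    ∏ j ∈ T, (1 - s * a j) ≤ 1 - s + s * ∏ j ∈ T, (1 - a j) := by
  induction T using Finset.cons_induction with
  | empty => simp
  | cons j T hj ih =>
    rw [Finset.prod_cons, Finset.prod_cons]
    have haj := ha j (Finset.mem_cons_self j T)
    have ihT := ih (fun k hk => ha k (Finset.mem_cons_of_mem hk))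
    have hQ0 : (0:ℝ) ≤ ∏ k ∈ T, (1 - a k) :=
      Finset.prod_nonneg (fun k hk => by linarith [(ha k (Finset.mem_cons_of_mem hk)).2])
    have hQ1 : ∏ k ∈ T, (1 - a k) ≤ 1 :=
      Finset.prod_le_one (fun k hk => by linarith [(ha k (Finset.mem_cons_of_mem hk)).2])
        (fun k hk => by linarith [(ha k (Finset.mem_cons_of_mem hk)).1])
    have h1 : 0 ≤ 1 - s * a j := by nlinarith
    calc (1 - s * a j) * ∏ k ∈ T, (1 - s * a k)
        ≤ (1 - s * a j) * (1 - s + s * ∏ k ∈ T, (1 - a k)) := by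
          apply mul_le_mul_of_nonneg_left ihT h1
      _ ≤ 1 - s + s * ((1 - a j) * ∏ k ∈ T, (1 - a k)) := by
          have key : 0 ≤ s * a j * ((1 - s) * (1 - ∏ k ∈ T, (1 - a k))) :=
            mul_nonneg (mul_nonneg hs0 haj.1)
              (mul_nonneg (by linarith) (by linarith))
          nlinarith [key]

lemma prod_ub {ι : Type*} (T : Finset ι) (a : ι → ℝ)
    (ha : ∀ j ∈ T, 0 ≤ a j ∧ a j ≤ 1) :
    ∏ j ∈ T, (1 - a j) ≤ 1 - (∑ j ∈ T, a j) + (∑ j ∈ T, a j)^2 := by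
  induction T using Finset.cons_induction with
  | empty => simp
  | cons j T hj ih =>
    rw [Finset.prod_cons, Finset.sum_cons]
    have haj := ha j (Finset.mem_cons_self j T)
    have ihT := ih (fun k hk => ha k (Finset.mem_cons_of_mem hk))
    have hS0 : (0:ℝ) ≤ ∑ k ∈ T, a k :=
      Finset.sum_nonneg (fun k hk => (ha k (Finset.mem_cons_of_mem hk)).1)
    nlinarith [sq_nonneg (∑ k ∈ T, a k), sq_nonneg (a j)]

/-- comparison of positive fixed points of `Hfun`. -/
lemma fixed_le {n : ℕ} (G : SimpleGraph (Fin n)) [DecidableRel G.Adj] {β δ c : ℝ}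
    (hβ0 : 0 < β) (hβ1 : β ≤ 1) (hδ : 0 < δ) (hc : 1 ≤ c)
    {y z : Fin n → ℝ} (hy1 : ∀ j, y j ≤ 1) (hypos : ∀ j, 0 < y j)
    (hyfix : ∀ i, Hfun G β δ c y i = y i)
    (hz1 : ∀ j, z j ≤ 1) (hzpos : ∀ j, 0 < z j)
    (hzfix : ∀ i, Hfun G β δ c z i = z i) : ∀ i, z i ≤ y i := by
  intro i
  have hc0 : (0:ℝ) < c := by linarith
  obtain ⟨i1, -, hi1⟩ := Finset.exists_min_image Finset.univ (fun i => y i / z i)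
    ⟨i, Finset.mem_univ _⟩
  set s := y i1 / z i1 with hsdef
  have hs_pos : 0 < s := div_pos (hypos i1) (hzpos i1)
  have hsz : ∀ i, s * z i ≤ y i := by
    intro i
    have := hi1 i (Finset.mem_univ i)
    calc s * z i ≤ (y i / z i) * z i := by
          apply mul_le_mul_of_nonneg_right this (hzpos i).le
      _ = y i := div_mul_cancel₀ _ (hzpos i).ne'
  by_cases hs1 : 1 ≤ s
  · calc z i = 1 * z i := (one_mul _).symm
      _ ≤ s * z i := mul_le_mul_of_nonneg_right hs1 (hzpos i).le
      _ ≤ y i := hsz i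
  push_neg at hs1
  exfalso
  -- positive infection pressure at i1
  have hz0 : ∀ j, 0 ≤ z j := fun j => (hzpos j).le
  have hy0 : ∀ j, 0 ≤ y j := fun j => (hypos j).le
  have hgz0 : 0 ≤ gfun G β z i1 := g_nonneg G hβ0.le hβ1 hz0 hz1 i1
  have hgz : 0 < gfun G β z i1 := by
    rcases hgz0.lt_or_eq with h | h
    · exact h
    · exfalso
      have := hzfix i1
      rw [Hfun, ← h] at this
      simp at this
      linarith [hzpos i1, this]
  set t := gfun G β z i1 with htdef
  -- subhomogeneity of g
  have hA1 : s * t ≤ gfun G β (fun j => s * z j) i1 := by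
    have hprod : ∏ j ∈ G.neighborFinset i1, (1 - β * (s * z j))
        ≤ 1 - s + s * ∏ j ∈ G.neighborFinset i1, (1 - β * z j) := by
      have := prod_subhom (G.neighborFinset i1) (fun j => β * z j) s hs_pos.le hs1.le
        (fun j _ => ⟨by show (0:ℝ) ≤ β * z j; exact mul_nonneg hβ0.le (hz0 j), by show β * z j ≤ 1; nlinarith [hz1 j, hz0 j, hβ1, hβ0.le]⟩)
      calc ∏ j ∈ G.neighborFinset i1, (1 - β * (s * z j))
          = ∏ j ∈ G.neighborFinset i1, (1 - s * (β * z j)) := by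
            apply Finset.prod_congr rfl; intro j _; ring_nf
        _ ≤ _ := this
    rw [gfun, htdef, gfun]
    nlinarith [hprod]
  -- monotonicity
  have hA2 : Hfun G β δ c (fun j => s * z j) i1 ≤ y i1 := by
    rw [← hyfix i1]
    apply H_mono G hβ0.le hβ1 hδ hc0 (fun j => mul_nonneg hs_pos.le (hz0 j)) hsz hy1
  -- f-monotonicity
  have hA3 : (s * t) / (δ + c * (s * t)) ≤ Hfun G β δ c (fun j => s * z j) i1 := by
    rw [Hfun]
    exact fmono hδ hc0 (mul_nonneg hs_pos.le hgz0) hA1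
  -- strictness
  have hA4 : s * (t / (δ + c * t)) < (s * t) / (δ + c * (s * t)) := by
    have hst : 0 < s * t := mul_pos hs_pos hgz
    rw [mul_div_assoc']
    apply div_lt_div_of_pos_left hst (denom_pos hδ hc0 hst.le)
    have h1 : s * t < t := by nlinarith
    nlinarith [mul_lt_mul_of_pos_left h1 hc0]
  have hend : s * z i1 = y i1 := by
    rw [hsdef]; exact div_mul_cancel₀ _ (hzpos i1).ne'
  have := hzfix i1
  rw [Hfun, ← htdef] at this
  nlinarith [hA2, hA3, hA4, this, hend]

open Filter Topology in
/-- existence of a positive fixed point of `Hfun` above threshold. -/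
lemma exists_fixed {n : ℕ} (G : SimpleGraph (Fin n)) [DecidableRel G.Adj] {β δ c lam : ℝ}
    (hβ0 : 0 < β) (hβ1 : β ≤ 1) (hδ : 0 < δ) (hc : 1 ≤ c)
    (w : Fin n → ℝ) (hw0 : ∀ i, 0 < w i) (hw1 : ∀ i, w i ≤ 1)
    (hweig : ∀ i, ∑ j ∈ G.neighborFinset i, w j = lam * w i) (hlam : δ < β * lam) :
    ∃ L : Fin n → ℝ, (∀ i, 0 < L i) ∧ (∀ i, L i ≤ 1) ∧ ∀ i, Hfun G β δ c L i = L i := by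
  have hc0 : (0:ℝ) < c := by linarith
  set bl := β * lam with hbldef
  have hbl : 0 < bl := lt_trans hδ hlam
  set K := (bl - δ) / (bl + c) with hKdef
  have hblc : 0 < bl + c := by linarith
  have hK0 : 0 < K := div_pos (by linarith) hblc
  have hK1 : K < 1 := by rw [hKdef, div_lt_one hblc]; linarith
  set ε := min 1 (K / bl) with hεdef
  have hε0 : 0 < ε := lt_min one_pos (div_pos hK0 hbl)
  have hε1 : ε ≤ 1 := min_le_left _ _
  have hεbl : ε * bl ≤ K := by
    have h1 : ε ≤ K / bl := min_le_right _ _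
    calc ε * bl ≤ (K / bl) * bl := mul_le_mul_of_nonneg_right h1 hbl.le
      _ = K := div_mul_cancel₀ _ hbl.ne'
  set x0 : Fin n → ℝ := fun i => ε * w i with hx0def
  have hx00 : ∀ i, 0 < x0 i := fun i => mul_pos hε0 (hw0 i)
  have hx01 : ∀ i, x0 i ≤ 1 := fun i => by
    show ε * w i ≤ 1
    nlinarith [hw0 i, hw1 i]
  -- key step: H x0 ≥ x0
  have key : ∀ i, x0 i ≤ Hfun G β δ c x0 i := by
    intro i
    set S := bl * (ε * w i) with hSdef
    have hS0 : 0 ≤ S := mul_nonneg hbl.le (mul_nonneg hε0.le (hw0 i).le)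
    have hSK : S ≤ K := by
      rw [hSdef]
      calc bl * (ε * w i) ≤ bl * (ε * 1) := by nlinarith [hw1 i, hw0 i]
        _ = ε * bl := by ring
        _ ≤ K := hεbl
    have hsum : ∑ j ∈ G.neighborFinset i, β * (ε * w j) = S := by
      have : ∑ j ∈ G.neighborFinset i, β * (ε * w j)
          = (β * ε) * ∑ j ∈ G.neighborFinset i, w j := by
        rw [Finset.mul_sum]
        exact Finset.sum_congr rfl (fun j _ => by ring)
      rw [this, hweig i, hSdef, hbldef]; ring
    have hub := prod_ub (G.neighborFinset i) (fun j => β * (ε * w j)) (fun j _ => by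
      constructor
      · show (0:ℝ) ≤ β * (ε * w j)
        exact mul_nonneg hβ0.le (mul_nonneg hε0.le (hw0 j).le)
      · show β * (ε * w j) ≤ 1
        have h1 : ε * w j ≤ 1 := hx01 j
        have h2 : (0:ℝ) ≤ ε * w j := (hx00 j).le
        nlinarith)
    rw [hsum] at hub
    have hg : S - S^2 ≤ gfun G β x0 i := by
      show S - S^2 ≤ 1 - ∏ j ∈ G.neighborFinset i, (1 - β * x0 j)
      have : ∏ j ∈ G.neighborFinset i, (1 - β * x0 j)
          = ∏ j ∈ G.neighborFinset i, (1 - β * (ε * w j)) := rfl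
      rw [this]
      linarith [hub]
    have hSS0 : 0 ≤ S - S^2 := by nlinarith
    have hfS : (S - S^2) / (δ + c * (S - S^2)) ≤ Hfun G β δ c x0 i := by
      rw [Hfun]
      exact fmono hδ hc0 hSS0 hg
    have hεw : x0 i = S / bl := by
      show ε * w i = S / bl
      rw [hSdef]
      field_simp
    rw [hεw]
    refine le_trans ?_ hfS
    rw [div_le_div_iff₀ hbl (denom_pos hδ hc0 hSS0)]
    have h2 : (bl + c) * S ≤ bl - δ := by
      calc (bl + c) * S ≤ (bl + c) * K := mul_le_mul_of_nonneg_left hSK hblc.le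
        _ = bl - δ := by rw [hKdef]; field_simp
    have hinner : 0 ≤ bl - δ - (bl + c) * S + c * S^2 := by nlinarith [sq_nonneg S]
    nlinarith [mul_nonneg hS0 hinner]
  -- iterate
  set x : ℕ → Fin n → ℝ := fun k => (Hfun G β δ c)^[k] x0 with hxdef
  have hx0eq : x 0 = x0 := rfl
  have hxs : ∀ k, x (k+1) = Hfun G β δ c (x k) := fun k =>
    Function.iterate_succ_apply' (Hfun G β δ c) k x0
  have hinv : ∀ k, (∀ i, 0 ≤ x k i) ∧ (∀ i, x k i ≤ 1) ∧ (∀ i, x k i ≤ x (k+1) i) := by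
    intro k
    induction k with
    | zero =>
      refine ⟨fun i => (hx00 i).le, fun i => hx01 i, fun i => ?_⟩
      rw [hxs 0, hx0eq]
      exact key i
    | succ k ih =>
      obtain ⟨h0, h1, h2⟩ := ih
      have h0' : ∀ i, 0 ≤ x (k+1) i := by
        rw [hxs k]; exact fun i => H_nonneg G hβ0.le hβ1 hδ hc0 h0 h1 i
      have h1' : ∀ i, x (k+1) i ≤ 1 := by
        rw [hxs k]; exact fun i => H_le_one G hβ0.le hβ1 hδ hc h0 h1 i
      refine ⟨h0', h1', fun i => ?_⟩
      have step := H_mono G hβ0.le hβ1 hδ hc0 h0 h2 h1' i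
      rw [← hxs k, ← hxs (k+1)] at step
      exact step
  have hmono : ∀ i, Monotone fun k => x k i :=
    fun i => monotone_nat_of_le_succ (fun k => (hinv k).2.2 i)
  have hbdd : ∀ i, BddAbove (Set.range fun k => x k i) := by
    intro i
    exact ⟨1, by rintro v ⟨k, rfl⟩; exact (hinv k).2.1 i⟩
  set L : Fin n → ℝ := fun i => ⨆ k, x k i with hLdef
  have htend : ∀ i, Tendsto (fun k => x k i) atTop (𝓝 (L i)) :=
    fun i => tendsto_atTop_ciSup (hmono i) (hbdd i)
  have hLo : ∀ i, x0 i ≤ L i := fun i => le_ciSup (hbdd i) 0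
  have hL0 : ∀ i, 0 ≤ L i := fun i => le_trans (hx00 i).le (hLo i)
  have hL1 : ∀ i, L i ≤ 1 := fun i => ciSup_le (fun k => (hinv k).2.1 i)
  have hcont : ∀ i, ContinuousAt (fun y : Fin n → ℝ => Hfun G β δ c y i) L := by
    intro i
    have hgc : Continuous fun y : Fin n → ℝ => gfun G β y i := by
      unfold gfun
      exact continuous_const.sub (continuous_finset_prod _ (fun j _ =>
        continuous_const.sub (continuous_const.mul (continuous_apply j))))
    apply ContinuousAt.div hgc.continuousAt
      ((continuous_const.add (continuous_const.mul hgc)).continuousAt)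
    exact (denom_pos hδ hc0 (g_nonneg G hβ0.le hβ1 hL0 hL1 i)).ne'
  have hfix : ∀ i, Hfun G β δ c L i = L i := by
    intro i
    have t1 : Tendsto (fun k => x (k+1) i) atTop (𝓝 (L i)) :=
      (htend i).comp (tendsto_add_atTop_nat 1)
    have t2 : Tendsto (fun k : ℕ => Hfun G β δ c (x k) i) atTop (𝓝 (Hfun G β δ c L i)) :=
      ((hcont i).tendsto.comp (tendsto_pi_nhds.mpr htend))
    have heq : (fun k => x (k+1) i) = fun k : ℕ => Hfun G β δ c (x k) i :=
      funext fun k => by rw [hxs k]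
    rw [heq] at t1
    exact tendsto_nhds_unique t2 t1
  exact ⟨L, fun i => lt_of_lt_of_le (hx00 i) (hLo i), hL1, hfix⟩


lemma prod_factors_eq_one {ι : Type*} [DecidableEq ι] (T : Finset ι) (f : ι → ℝ)
    (h0 : ∀ k ∈ T, 0 ≤ f k) (h1 : ∀ k ∈ T, f k ≤ 1) (hprod : ∏ k ∈ T, f k = 1) :
    ∀ j ∈ T, f j = 1 := by
  intro j hj
  have hm := Finset.mul_prod_erase T f hj
  have hP1 : ∏ k ∈ T.erase j, f k ≤ 1 :=
    Finset.prod_le_one (fun k hk => h0 k (Finset.mem_of_mem_erase hk))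
      (fun k hk => h1 k (Finset.mem_of_mem_erase hk))
  have hP0 : 0 ≤ ∏ k ∈ T.erase j, f k :=
    Finset.prod_nonneg (fun k hk => h0 k (Finset.mem_of_mem_erase hk))
  have hfj0 := h0 j hj
  have hfj1 := h1 j hj
  rw [hprod] at hm
  nlinarith [mul_le_mul_of_nonneg_left hP1 hfj0]

/-- If `β λmax(A)/δ > 1`, the SIRS nonlinear map `F` has exactly one fixed
point in `D` other than the origin; it satisfies `P_R* = (δ/γ) P_I*` componentwise and all
its entries are strictly positive. -/
theorem stmt13 {n : ℕ} (hn : 1 ≤ n) (G : SimpleGraph (Fin n)) [DecidableRel G.Adj]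
    (hG : G.Connected) (β δ γ : ℝ) (hβ : β ∈ Set.Ioo (0 : ℝ) 1)
    (hδ : δ ∈ Set.Ioo (0 : ℝ) 1) (hγ : γ ∈ Set.Ioo (0 : ℝ) 1)
    (h : 1 < β * lamMax (G.adjMatrix ℝ) / δ) :
    ∃ p : (Fin n → ℝ) × (Fin n → ℝ), p ∈ sirsD n ∧ p ≠ 0 ∧ sirsF G β δ γ p = p ∧
      (∀ q ∈ sirsD n, q ≠ 0 → sirsF G β δ γ q = q → q = p) ∧
      (∀ i, p.1 i = (δ / γ) * p.2 i) ∧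
      (∀ i, 0 < p.1 i ∧ 0 < p.2 i) := by
  obtain ⟨hβ0, hβ1⟩ := hβ
  obtain ⟨hδ0, hδ1⟩ := hδ
  obtain ⟨hγ0, hγ1⟩ := hγ
  haveI : Nonempty (Fin n) := ⟨⟨0, hn⟩⟩
  have hβlam : δ < β * lamMax (G.adjMatrix ℝ) := (one_lt_div hδ0).mp h
  have hdg0 : 0 < δ / γ := div_pos hδ0 hγ0
  have hc : (1:ℝ) ≤ 1 + δ / γ := by linarith
  have hc0 : (0:ℝ) < 1 + δ / γ := by linarith
  -- Perron eigenvector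
  obtain ⟨w, hw0', hwex, hweig⟩ := exists_perron hn G hG
  have hwz : ∀ i, w i = 0 → ∀ j, G.Adj i j → w j = 0 := by
    intro i hi j hj
    have hsum := hweig i
    rw [hi, mul_zero] at hsum
    exact (Finset.sum_eq_zero_iff_of_nonneg (fun k _ => hw0' k)).mp hsum j
      ((SimpleGraph.mem_neighborFinset G i j).mpr hj)
  have hwpos : ∀ i, 0 < w i := by
    apply spread_pos G hG w hw0' _ hwz
    obtain ⟨i, hi⟩ := hwex
    exact ⟨i, hi.ne'⟩
  -- normalize
  obtain ⟨im, -, him⟩ := Finset.exists_max_image Finset.univ w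
    ⟨Classical.arbitrary (Fin n), Finset.mem_univ _⟩
  set w' : Fin n → ℝ := fun i => w i / w im with hw'def
  have hw'pos : ∀ i, 0 < w' i := fun i => div_pos (hwpos i) (hwpos im)
  have hw'1 : ∀ i, w' i ≤ 1 := fun i =>
    (div_le_one (hwpos im)).mpr (him i (Finset.mem_univ i))
  have hw'eig : ∀ i, ∑ j ∈ G.neighborFinset i, w' j
      = lamMax (G.adjMatrix ℝ) * w' i := by
    intro i
    show ∑ j ∈ G.neighborFinset i, w j / w im = lamMax (G.adjMatrix ℝ) * (w i / w im)
    rw [← Finset.sum_div, hweig i]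
    ring
  -- positive fixed point of H
  obtain ⟨L, hLpos, hL1, hLfix⟩ := exists_fixed G hβ0 hβ1.le hδ0 hc w' hw'pos hw'1 hw'eig hβlam
  have hL0 : ∀ i, 0 ≤ L i := fun i => (hLpos i).le
  have hg0 : ∀ i, 0 ≤ gfun G β L i := g_nonneg G hβ0.le hβ1.le hL0 hL1
  have hdg : ∀ i, 0 < δ + (1 + δ/γ) * gfun G β L i := fun i => denom_pos hδ0 hc0 (hg0 i)
  have hkey : ∀ i, gfun G β L i = L i * (δ + (1 + δ/γ) * gfun G β L i) := by
    intro i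
    have := hLfix i
    rw [Hfun] at this
    exact ((div_eq_iff (hdg i).ne').mp this)
  have hcL : ∀ i, (1 + δ/γ) * L i ≤ 1 := by
    intro i
    have h1 : (1 + δ/γ) * L i * (δ + (1 + δ/γ) * gfun G β L i)
        = (1 + δ/γ) * gfun G β L i := by linear_combination (1 + δ/γ) * (hkey i).symm
    nlinarith [hdg i, hδ0, hg0 i, hc0, hL0 i]
  set p : (Fin n → ℝ) × (Fin n → ℝ) := (fun i => (δ/γ) * L i, L) with hpdef
  have hpD : p ∈ sirsD n := by
    refine ⟨⟨?_, ?_⟩, ⟨?_, ?_⟩, ?_⟩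
    · exact fun i => mul_nonneg hdg0.le (hL0 i)
    · intro i
      show (δ/γ) * L i ≤ 1
      calc (δ/γ) * L i ≤ (1 + δ/γ) * L i := by nlinarith [hL0 i]
        _ ≤ 1 := hcL i
    · exact fun i => hL0 i
    · exact fun i => hL1 i
    · intro i
      show (δ/γ) * L i + L i ≤ 1
      calc (δ/γ) * L i + L i = (1 + δ/γ) * L i := by ring
        _ ≤ 1 := hcL i
  have hpne : p ≠ 0 := by
    intro h0
    have := congrFun (congrArg Prod.snd h0) (Classical.arbitrary (Fin n))
    exact absurd this (ne_of_gt (hLpos _))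
  have hpfix : sirsF G β δ γ p = p := by
    refine Prod.ext ?_ ?_ <;> funext i
    · show (1 - γ) * ((δ/γ) * L i) + δ * L i = (δ/γ) * L i
      field_simp
      ring
    · show (1 - δ) * L i + (gfun G β L i) * (1 - (δ/γ) * L i - L i) = L i
      linear_combination hkey i
  have huniq : ∀ q ∈ sirsD n, q ≠ 0 → sirsF G β δ γ q = q → q = p := by
    intro q hq hq0 hqfix
    obtain ⟨⟨hq10, hq11⟩, ⟨hq20, hq21⟩, hqsum⟩ := hq
    have hfst : ∀ i, (1 - γ) * q.1 i + δ * q.2 i = q.1 i :=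
      fun i => congrFun (congrArg Prod.fst hqfix) i
    have hq1eq : ∀ i, q.1 i = (δ/γ) * q.2 i := by
      intro i
      have h1 := hfst i
      field_simp
      linarith [h1]
    have hsnd : ∀ i, (1 - δ) * q.2 i + (gfun G β (q.2) i) * (1 - q.1 i - q.2 i) = q.2 i :=
      fun i => congrFun (congrArg Prod.snd hqfix) i
    have hy0 : ∀ i, 0 ≤ q.2 i := fun i => hq20 i
    have hy1 : ∀ i, q.2 i ≤ 1 := fun i => hq21 i
    have hkey2 : ∀ i, gfun G β (q.2) i = q.2 i * (δ + (1 + δ/γ) * gfun G β (q.2) i) := by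
      intro i
      have hs := hsnd i
      rw [hq1eq i] at hs
      linear_combination hs
    have hyne : ∃ i, q.2 i ≠ 0 := by
      by_contra hcon
      push_neg at hcon
      apply hq0
      have h2 : q.2 = 0 := funext fun i => hcon i
      have h1 : q.1 = 0 := funext fun i => by rw [hq1eq i, hcon i, mul_zero]; rfl
      exact Prod.ext h1 h2
    have hyz : ∀ i, q.2 i = 0 → ∀ j, G.Adj i j → q.2 j = 0 := by
      intro i hi j hj
      have hg : gfun G β (q.2) i = 0 := by rw [hkey2 i, hi, zero_mul]
      rw [gfun, sub_eq_zero] at hg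
      have hfac := prod_factors_eq_one (G.neighborFinset i) (fun k => 1 - β * q.2 k)
        (fun k _ => by show (0:ℝ) ≤ 1 - β * q.2 k; nlinarith [hy1 k, hy0 k])
        (fun k _ => by show 1 - β * q.2 k ≤ 1; nlinarith [hy0 k])
        hg.symm j ((SimpleGraph.mem_neighborFinset G i j).mpr hj)
      have : 1 - β * q.2 j = 1 := hfac
      nlinarith [hy0 j]
    have hypos : ∀ i, 0 < q.2 i := by
      apply spread_pos G hG q.2 hy0 hyne hyz
    have hyfix : ∀ i, Hfun G β δ (1 + δ/γ) (q.2) i = q.2 i := by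
      intro i
      rw [Hfun, div_eq_iff (denom_pos hδ0 hc0 (g_nonneg G hβ0.le hβ1.le hy0 hy1 i)).ne']
      exact hkey2 i
    have hle1 : ∀ i, q.2 i ≤ L i :=
      fixed_le G hβ0 hβ1.le hδ0 hc hL1 hLpos hLfix hy1 hypos hyfix
    have hle2 : ∀ i, L i ≤ q.2 i :=
      fixed_le G hβ0 hβ1.le hδ0 hc hy1 hypos hyfix hL1 hLpos hLfix
    have hqL : q.2 = L := funext fun i => le_antisymm (hle1 i) (hle2 i)
    refine Prod.ext ?_ ?_
    · funext i
      rw [hq1eq i, hqL]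
    · exact hqL
  exact ⟨p, hpD, hpne, hpfix, huniq,
    fun i => rfl,
    fun i => ⟨mul_pos hdg0 (hLpos i), hLpos i⟩⟩
end

section
/- Consider the SIRS Markov chain on {0,1,2}^n with transition matrix S, and let π be the point mass on the all-susceptible state (its unique stationary distribution). Let M be the block matrix [[(1−γ)I_n, δI_n], [0_{n×n}, (1−δ)I_n + βA]]. Then for every t ≥ 0 and every initial distribution μ, ‖μS^t − π‖_TV ≤ 1_{2n}ᵀ M^t 1_{2n} ≤ 2n‖M‖^t, where ‖M‖ is the spectral norm of M. Consequently, if ‖M‖ < 1, then for every ε ∈ (0,1) the mixing time satisfies t_mix(ε) ≤ log(2n/ε)/(−log‖M‖); in particular the mixing time is O(log n). -/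
open Matrix Finset

/-- Number of infected neighbors of node `i` in state `X` (infected = state `1`). -/
def numInf3 {n : ℕ} (G : SimpleGraph (Fin n)) [DecidableRel G.Adj]
    (X : Fin n → Fin 3) (i : Fin n) : ℕ :=
  ((G.neighborFinset i).filter (fun j => X j = 1)).card

/-- The `3^n × 3^n` transition matrix of the SIRS Markov chain
(`0` = susceptible, `1` = infected, `2` = recovered). -/
noncomputable def sirsTrans {n : ℕ} (G : SimpleGraph (Fin n)) [DecidableRel G.Adj]
    (β δ γ : ℝ) : Matrix (Fin n → Fin 3) (Fin n → Fin 3) ℝ :=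
  Matrix.of fun X Y => ∏ i,
    if X i = 0 then
      (if Y i = 0 then (1 - β) ^ numInf3 G X i
       else if Y i = 1 then 1 - (1 - β) ^ numInf3 G X i
       else 0)
    else if X i = 1 then
      (if Y i = 0 then 0 else if Y i = 1 then 1 - δ else δ)
    else
      (if Y i = 0 then γ else if Y i = 1 then 0 else 1 - γ)

/-- The point mass on the all-susceptible state. -/
noncomputable def sirsPi (n : ℕ) : (Fin n → Fin 3) → ℝ :=
  fun X => if X = (fun _ => (0 : Fin 3)) then 1 else 0

/-- Total variation distance. -/
noncomputable def tvDist {α : Type*} [Fintype α] (μ ν : α → ℝ) : ℝ :=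
  (1 / 2) * ∑ x, |μ x - ν x|

/-- The block matrix `M = [[(1−γ)I, δI], [0, (1−δ)I + βA]]`. -/
noncomputable def sirsM {n : ℕ} (G : SimpleGraph (Fin n)) [DecidableRel G.Adj]
    (β δ γ : ℝ) : Matrix (Fin n ⊕ Fin n) (Fin n ⊕ Fin n) ℝ :=
  Matrix.fromBlocks ((1 - γ) • (1 : Matrix (Fin n) (Fin n) ℝ))
    (δ • (1 : Matrix (Fin n) (Fin n) ℝ)) 0
    ((1 - δ) • (1 : Matrix (Fin n) (Fin n) ℝ) + β • G.adjMatrix ℝ)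

/-- The spectral norm (`ℓ²`-operator norm) of a real matrix. -/
noncomputable def specNorm {m : Type*} [Fintype m] [DecidableEq m] (M : Matrix m m ℝ) : ℝ :=
  ‖LinearMap.toContinuousLinearMap (Matrix.toEuclideanLin M)‖

/-- The mixing time `t_mix(ε) = min {t : sup_μ ‖μ Sᵗ − π‖_TV ≤ ε}` of the SIRS chain. -/
noncomputable def sirsMix {n : ℕ} (G : SimpleGraph (Fin n)) [DecidableRel G.Adj]
    (β δ γ ε : ℝ) : ℕ :=
  sInf {t : ℕ | ∀ μ : (Fin n → Fin 3) → ℝ, (∀ X, 0 ≤ μ X) → ∑ X, μ X = 1 →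
    tvDist (μ ᵥ* (sirsTrans G β δ γ ^ t)) (sirsPi n) ≤ ε}


section AuxK
variable {n : ℕ} (G : SimpleGraph (Fin n)) [DecidableRel G.Adj] (β δ γ : ℝ)

noncomputable def nodeK (X : Fin n → Fin 3) (i : Fin n) (y : Fin 3) : ℝ :=
  if X i = 0 then
    (if y = 0 then (1 - β) ^ numInf3 G X i
     else if y = 1 then 1 - (1 - β) ^ numInf3 G X i else 0)
  else if X i = 1 then (if y = 0 then 0 else if y = 1 then 1 - δ else δ)
  else (if y = 0 then γ else if y = 1 then 0 else 1 - γ)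

lemma sirsTrans_apply (X Y : Fin n → Fin 3) :
    sirsTrans G β δ γ X Y = ∏ i, nodeK G β δ γ X i (Y i) := rfl

lemma nodeK_sum (X : Fin n → Fin 3) (i : Fin n) : ∑ y, nodeK G β δ γ X i y = 1 := by
  have h10 : ((1:Fin 3) = 0) = False := by simp
  have h20 : ((2:Fin 3) = 0) = False := by simp
  have h21 : ((2:Fin 3) = 1) = False := by simp
  simp only [Fin.sum_univ_three, nodeK, h10, h20, h21, if_true, if_false]
  split_ifs <;> ring

variable {β δ γ}

lemma nodeK_nonneg (hβ : β ∈ Set.Ioo (0:ℝ) 1) (hδ : δ ∈ Set.Ioo (0:ℝ) 1)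
    (hγ : γ ∈ Set.Ioo (0:ℝ) 1) (X : Fin n → Fin 3) (i : Fin n) (y : Fin 3) :
    0 ≤ nodeK G β δ γ X i y := by
  obtain ⟨hβ0, hβ1⟩ := hβ; obtain ⟨hδ0, hδ1⟩ := hδ; obtain ⟨hγ0, hγ1⟩ := hγ
  have h1 : (0:ℝ) ≤ (1 - β) ^ numInf3 G X i := pow_nonneg (by linarith) _
  have h2 : (1 - β) ^ numInf3 G X i ≤ 1 := pow_le_one₀ (by linarith) (by linarith)
  unfold nodeK
  split_ifs <;> linarith

lemma sum_sirsTrans_mul (X : Fin n → Fin 3) (g : Fin 3 → ℝ) (i : Fin n) :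
    ∑ Y, sirsTrans G β δ γ X Y * g (Y i) = ∑ y, nodeK G β δ γ X i y * g y := by
  have h1 : ∀ Y : Fin n → Fin 3, sirsTrans G β δ γ X Y * g (Y i)
      = ∏ j, (nodeK G β δ γ X j (Y j) * (if j = i then g (Y j) else 1)) := by
    intro Y
    rw [Finset.prod_mul_distrib, sirsTrans_apply]
    congr 1
    simp
  simp_rw [h1]
  rw [show (Finset.univ : Finset (Fin n → Fin 3))
      = Fintype.piFinset (fun _ => (Finset.univ : Finset (Fin 3))) from
      (Fintype.piFinset_univ).symm,
    ← Finset.prod_univ_sum (fun _ => (Finset.univ : Finset (Fin 3)))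
      (fun j y => nodeK G β δ γ X j y * if j = i then g y else 1)]
  have h2 : ∀ j, (∑ y, nodeK G β δ γ X j y * (if j = i then g y else 1))
      = if j = i then ∑ y, nodeK G β δ γ X i y * g y else 1 := by
    intro j
    by_cases hj : j = i
    · subst hj; simp
    · simp [hj, nodeK_sum]
  simp_rw [h2]
  simp

lemma sirsTrans_rowsum (X : Fin n → Fin 3) : ∑ Y, sirsTrans G β δ γ X Y = 1 := by
  simp_rw [sirsTrans_apply]
  rw [show (Finset.univ : Finset (Fin n → Fin 3))
      = Fintype.piFinset (fun _ => (Finset.univ : Finset (Fin 3))) from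
      (Fintype.piFinset_univ).symm,
    ← Finset.prod_univ_sum (fun _ => (Finset.univ : Finset (Fin 3)))
      (fun j y => nodeK G β δ γ X j y)]
  simp [nodeK_sum]

lemma sirsTrans_nonneg (hβ : β ∈ Set.Ioo (0:ℝ) 1) (hδ : δ ∈ Set.Ioo (0:ℝ) 1)
    (hγ : γ ∈ Set.Ioo (0:ℝ) 1) (X Y : Fin n → Fin 3) :
    0 ≤ sirsTrans G β δ γ X Y := by
  rw [sirsTrans_apply]
  exact Finset.prod_nonneg fun j _ => nodeK_nonneg G hβ hδ hγ X j (Y j)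

end AuxK

noncomputable def qvec {n : ℕ} (ν : (Fin n → Fin 3) → ℝ) : Fin n ⊕ Fin n → ℝ :=
  Sum.elim (fun i => ∑ X, ν X * (if X i = 2 then (1:ℝ) else 0))
           (fun i => ∑ X, ν X * (if X i = 1 then (1:ℝ) else 0))

section AuxM
variable {n : ℕ} (G : SimpleGraph (Fin n)) [DecidableRel G.Adj] (β δ γ : ℝ)

lemma sirsM_mulVec_inl (v : Fin n ⊕ Fin n → ℝ) (i : Fin n) :
    (sirsM G β δ γ *ᵥ v) (Sum.inl i) = (1 - γ) * v (Sum.inl i) + δ * v (Sum.inr i) := by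
  simp [sirsM, Matrix.mulVec, dotProduct, Fintype.sum_sum_type,
    Matrix.one_apply, ite_mul, Finset.mul_sum, mul_ite]

lemma sirsM_mulVec_inr (v : Fin n ⊕ Fin n → ℝ) (i : Fin n) :
    (sirsM G β δ γ *ᵥ v) (Sum.inr i)
      = (1 - δ) * v (Sum.inr i) + β * ∑ j, (if G.Adj i j then v (Sum.inr j) else 0) := by
  simp [sirsM, Matrix.mulVec, dotProduct, Fintype.sum_sum_type,
    Matrix.one_apply, ite_mul, Finset.mul_sum, mul_ite, add_mul,
    Finset.sum_add_distrib]

variable {β δ γ}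

lemma sirsM_nonneg (hβ : β ∈ Set.Ioo (0:ℝ) 1) (hδ : δ ∈ Set.Ioo (0:ℝ) 1)
    (hγ : γ ∈ Set.Ioo (0:ℝ) 1) (k l : Fin n ⊕ Fin n) : 0 ≤ sirsM G β δ γ k l := by
  obtain ⟨hβ0, hβ1⟩ := hβ; obtain ⟨hδ0, hδ1⟩ := hδ; obtain ⟨hγ0, hγ1⟩ := hγ
  rcases k with i | i <;> rcases l with j | j <;>
    simp [sirsM, Matrix.one_apply] <;> split_ifs <;> linarith

lemma qstep_core (ν : (Fin n → Fin 3) → ℝ) (g : Fin 3 → ℝ) (i : Fin n) :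
    ∑ Y, (ν ᵥ* sirsTrans G β δ γ) Y * g (Y i)
      = ∑ X, ν X * ∑ y, nodeK G β δ γ X i y * g y := by
  have hvm : ∀ Y, (ν ᵥ* sirsTrans G β δ γ) Y = ∑ X, ν X * sirsTrans G β δ γ X Y := by
    intro Y; simp [Matrix.vecMul, dotProduct]
  simp_rw [hvm, Finset.sum_mul, mul_assoc]
  rw [Finset.sum_comm]
  simp_rw [← Finset.mul_sum, sum_sirsTrans_mul]

lemma numInf3_cast (X : Fin n → Fin 3) (i : Fin n) :
    (∑ j, if G.Adj i j then (if X j = (1:Fin 3) then (1:ℝ) else 0) else 0)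
      = (numInf3 G X i : ℝ) := by
  have h : ((G.neighborFinset i).filter (fun j => X j = 1))
      = univ.filter (fun j => G.Adj i j ∧ X j = 1) := by
    ext j; simp [SimpleGraph.mem_neighborFinset]
  rw [numInf3, h, Finset.card_filter]
  push_cast
  refine Finset.sum_congr rfl fun j _ => ?_
  by_cases h1 : G.Adj i j <;> by_cases h2 : X j = 1 <;> simp [h1, h2]

lemma fin3_cases (y : Fin 3) : y = 0 ∨ y = 1 ∨ y = 2 := by omega

lemma qvec_step (hβ : β ∈ Set.Ioo (0:ℝ) 1) (hδ : δ ∈ Set.Ioo (0:ℝ) 1)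
    (hγ : γ ∈ Set.Ioo (0:ℝ) 1) (ν : (Fin n → Fin 3) → ℝ) (hν : ∀ X, 0 ≤ ν X)
    (k : Fin n ⊕ Fin n) :
    qvec (ν ᵥ* sirsTrans G β δ γ) k ≤ (sirsM G β δ γ *ᵥ qvec ν) k := by
  obtain ⟨hβ0, hβ1⟩ := hβ; obtain ⟨hδ0, hδ1⟩ := hδ; obtain ⟨hγ0, hγ1⟩ := hγ
  rcases k with i | i
  · -- recovered coordinate: equality
    have hL : qvec (ν ᵥ* sirsTrans G β δ γ) (Sum.inl i)
        = ∑ X, ν X * nodeK G β δ γ X i 2 := by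
      show (∑ Y, (ν ᵥ* sirsTrans G β δ γ) Y * (if Y i = 2 then (1:ℝ) else 0))
        = ∑ X, ν X * nodeK G β δ γ X i 2
      rw [qstep_core G ν (fun y => if y = 2 then (1:ℝ) else 0) i]
      refine Finset.sum_congr rfl fun X _ => ?_
      congr 1
      simp [Fin.sum_univ_three]
    rw [hL, sirsM_mulVec_inl]
    have hR : (1 - γ) * qvec ν (Sum.inl i) + δ * qvec ν (Sum.inr i)
        = ∑ X, ν X * ((1-γ) * (if X i = 2 then (1:ℝ) else 0)
            + δ * (if X i = 1 then (1:ℝ) else 0)) := by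
      show (1 - γ) * (∑ X, ν X * (if X i = 2 then (1:ℝ) else 0))
          + δ * (∑ X, ν X * (if X i = 1 then (1:ℝ) else 0)) = _
      rw [Finset.mul_sum, Finset.mul_sum, ← Finset.sum_add_distrib]
      refine Finset.sum_congr rfl fun X _ => by ring
    rw [hR]
    refine le_of_eq (Finset.sum_congr rfl fun X _ => ?_)
    rcases fin3_cases (X i) with h | h | h <;> simp [nodeK, h] <;> ring
  · -- infected coordinate: inequality
    have hL : qvec (ν ᵥ* sirsTrans G β δ γ) (Sum.inr i)
        = ∑ X, ν X * nodeK G β δ γ X i 1 := by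
      show (∑ Y, (ν ᵥ* sirsTrans G β δ γ) Y * (if Y i = 1 then (1:ℝ) else 0))
        = ∑ X, ν X * nodeK G β δ γ X i 1
      rw [qstep_core G ν (fun y => if y = 1 then (1:ℝ) else 0) i]
      refine Finset.sum_congr rfl fun X _ => ?_
      congr 1
      simp [Fin.sum_univ_three]
    rw [hL, sirsM_mulVec_inr]
    have hR : (1 - δ) * qvec ν (Sum.inr i)
          + β * ∑ j, (if G.Adj i j then qvec ν (Sum.inr j) else 0)
        = ∑ X, ν X * ((1-δ) * (if X i = 1 then (1:ℝ) else 0)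
            + β * (numInf3 G X i : ℝ)) := by
      show (1 - δ) * (∑ X, ν X * (if X i = 1 then (1:ℝ) else 0))
          + β * (∑ j, if G.Adj i j then (∑ X, ν X * (if X j = 1 then (1:ℝ) else 0)) else 0)
        = _
      have hswap : (∑ j, if G.Adj i j then
            (∑ X, ν X * (if X j = 1 then (1:ℝ) else 0)) else 0)
          = ∑ X, ν X * (numInf3 G X i : ℝ) := by
        have h1 : ∀ j, (if G.Adj i j then
              (∑ X, ν X * (if X j = 1 then (1:ℝ) else 0)) else 0)
            = ∑ X, ν X * (if G.Adj i j then (if X j = 1 then (1:ℝ) else 0) else 0) := by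
          intro j; split_ifs <;> simp
        simp_rw [h1]
        rw [Finset.sum_comm]
        refine Finset.sum_congr rfl fun X _ => ?_
        rw [← Finset.mul_sum, numInf3_cast]
      rw [hswap, Finset.mul_sum, Finset.mul_sum, ← Finset.sum_add_distrib]
      refine Finset.sum_congr rfl fun X _ => by ring
    rw [hR]
    refine Finset.sum_le_sum fun X _ => mul_le_mul_of_nonneg_left ?_ (hν X)
    have hbern : 1 - (1 - β) ^ numInf3 G X i ≤ β * (numInf3 G X i : ℝ) := by
      have := one_add_mul_le_pow (a := -β) (by linarith) (numInf3 G X i)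
      have h2 : 1 + (numInf3 G X i : ℝ) * (-β) ≤ (1 - β) ^ numInf3 G X i := by
        simpa [sub_eq_add_neg] using this
      linarith
    have hm0 : (0:ℝ) ≤ (numInf3 G X i : ℝ) := Nat.cast_nonneg _
    rcases fin3_cases (X i) with h | h | h <;> simp [nodeK, h] <;> nlinarith

lemma mulVec_mono {m : Type*} [Fintype m] {M : Matrix m m ℝ} (hM : ∀ i j, 0 ≤ M i j)
    {u v : m → ℝ} (h : ∀ k, u k ≤ v k) (i : m) : (M *ᵥ u) i ≤ (M *ᵥ v) i := by
  simp only [Matrix.mulVec, dotProduct]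
  exact Finset.sum_le_sum fun j _ => mul_le_mul_of_nonneg_left (h j) (hM i j)

lemma pow_entry_nonneg {m : Type*} [Fintype m] [DecidableEq m] {M : Matrix m m ℝ}
    (hM : ∀ i j, 0 ≤ M i j) (t : ℕ) : ∀ i j, 0 ≤ (M ^ t) i j := by
  induction t with
  | zero => intro i j; rw [pow_zero]; rw [Matrix.one_apply]; split_ifs <;> norm_num
  | succ t ih =>
    intro i j
    rw [pow_succ, Matrix.mul_apply]
    exact Finset.sum_nonneg fun k _ => mul_nonneg (ih i k) (hM k j)

lemma rowsum_pow (t : ℕ) (X : Fin n → Fin 3) :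
    ∑ Y, (sirsTrans G β δ γ ^ t) X Y = 1 := by
  induction t generalizing X with
  | zero => simp [Matrix.one_apply]
  | succ t ih =>
    rw [pow_succ]
    simp_rw [Matrix.mul_apply]
    rw [Finset.sum_comm]
    have : ∀ Z, ∑ Y, (sirsTrans G β δ γ ^ t) X Z * sirsTrans G β δ γ Z Y
        = (sirsTrans G β δ γ ^ t) X Z := by
      intro Z; rw [← Finset.mul_sum, sirsTrans_rowsum]; ring
    simp_rw [this]
    exact ih X

lemma dist_pow_nonneg (hβ : β ∈ Set.Ioo (0:ℝ) 1) (hδ : δ ∈ Set.Ioo (0:ℝ) 1)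
    (hγ : γ ∈ Set.Ioo (0:ℝ) 1) (μ : (Fin n → Fin 3) → ℝ) (hμ : ∀ X, 0 ≤ μ X) (t : ℕ)
    (Y : Fin n → Fin 3) : 0 ≤ (μ ᵥ* (sirsTrans G β δ γ ^ t)) Y := by
  simp only [Matrix.vecMul, dotProduct]
  exact Finset.sum_nonneg fun X _ => mul_nonneg (hμ X)
    (pow_entry_nonneg (sirsTrans_nonneg G hβ hδ hγ) t X Y)

lemma dist_pow_sum (μ : (Fin n → Fin 3) → ℝ) (hμ1 : ∑ X, μ X = 1) (t : ℕ) :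
    ∑ Y, (μ ᵥ* (sirsTrans G β δ γ ^ t)) Y = 1 := by
  simp only [Matrix.vecMul, dotProduct]
  rw [Finset.sum_comm]
  have : ∀ X, ∑ Y, μ X * (sirsTrans G β δ γ ^ t) X Y = μ X := by
    intro X; rw [← Finset.mul_sum, rowsum_pow]; ring
  simp_rw [this, hμ1]

lemma qvec_pow_le (hβ : β ∈ Set.Ioo (0:ℝ) 1) (hδ : δ ∈ Set.Ioo (0:ℝ) 1)
    (hγ : γ ∈ Set.Ioo (0:ℝ) 1) (μ : (Fin n → Fin 3) → ℝ) (hμ : ∀ X, 0 ≤ μ X) (t : ℕ)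
    (k : Fin n ⊕ Fin n) :
    qvec (μ ᵥ* (sirsTrans G β δ γ ^ t)) k ≤ ((sirsM G β δ γ ^ t) *ᵥ qvec μ) k := by
  induction t generalizing k with
  | zero => simp [Matrix.vecMul_one, Matrix.one_mulVec]
  | succ t ih =>
    have h1 : μ ᵥ* (sirsTrans G β δ γ ^ (t+1))
        = (μ ᵥ* (sirsTrans G β δ γ ^ t)) ᵥ* sirsTrans G β δ γ := by
      rw [pow_succ, Matrix.vecMul_vecMul]
    rw [h1]
    calc qvec ((μ ᵥ* (sirsTrans G β δ γ ^ t)) ᵥ* sirsTrans G β δ γ) k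
        ≤ (sirsM G β δ γ *ᵥ qvec (μ ᵥ* (sirsTrans G β δ γ ^ t))) k :=
          qvec_step G hβ hδ hγ _ (dist_pow_nonneg G hβ hδ hγ μ hμ t) k
      _ ≤ (sirsM G β δ γ *ᵥ ((sirsM G β δ γ ^ t) *ᵥ qvec μ)) k :=
          mulVec_mono (sirsM_nonneg G hβ hδ hγ) ih k
      _ = ((sirsM G β δ γ ^ (t+1)) *ᵥ qvec μ) k := by
          rw [Matrix.mulVec_mulVec, ← pow_succ']

lemma qvec_nonneg (ν : (Fin n → Fin 3) → ℝ) (hν : ∀ X, 0 ≤ ν X) (k : Fin n ⊕ Fin n) :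
    0 ≤ qvec ν k := by
  rcases k with i | i <;>
    exact Finset.sum_nonneg fun X _ => mul_nonneg (hν X) (by split_ifs <;> norm_num)

lemma qvec_pair_le_one (ν : (Fin n → Fin 3) → ℝ) (hν : ∀ X, 0 ≤ ν X)
    (hs : ∑ X, ν X = 1) (i : Fin n) :
    qvec ν (Sum.inl i) + qvec ν (Sum.inr i) ≤ 1 := by
  show (∑ X, ν X * (if X i = 2 then (1:ℝ) else 0))
    + (∑ X, ν X * (if X i = 1 then (1:ℝ) else 0)) ≤ 1
  rw [← Finset.sum_add_distrib]
  have h1 : ∀ X : Fin n → Fin 3, ν X * (if X i = 2 then (1:ℝ) else 0)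
      + ν X * (if X i = 1 then (1:ℝ) else 0) ≤ ν X := by
    intro X
    have h0 := hν X
    rcases fin3_cases (X i) with h | h | h <;> rw [h] <;> norm_num [Fin.ext_iff] <;> linarith
  exact le_of_le_of_eq (Finset.sum_le_sum fun X _ => h1 X) hs

end AuxM

section AuxT
variable {n : ℕ}

lemma tvDist_le_qsum (ν : (Fin n → Fin 3) → ℝ) (hν : ∀ X, 0 ≤ ν X)
    (hs : ∑ X, ν X = 1) : tvDist ν (sirsPi n) ≤ ∑ k, qvec ν k := by
  classical
  set z : Fin n → Fin 3 := fun _ => 0 with hz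
  have hνz : ν z ≤ 1 := hs ▸ Finset.single_le_sum (fun X _ => hν X) (Finset.mem_univ z)
  have h1 : tvDist ν (sirsPi n) = 1 - ν z := by
    unfold tvDist
    rw [← Finset.add_sum_erase _ _ (Finset.mem_univ z)]
    have h2 : ∀ x ∈ Finset.univ.erase z, |ν x - sirsPi n x| = ν x := by
      intro x hx
      have hxz : x ≠ z := Finset.ne_of_mem_erase hx
      rw [show sirsPi n x = 0 from if_neg hxz, sub_zero, abs_of_nonneg (hν x)]
    rw [Finset.sum_congr rfl h2, Finset.sum_erase_eq_sub (Finset.mem_univ z), hs]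
    rw [show sirsPi n z = 1 from if_pos rfl, abs_of_nonpos (by linarith)]
    ring
  rw [h1]
  have h3 : (1:ℝ) - ν z = ∑ x ∈ Finset.univ.erase z, ν x := by
    rw [Finset.sum_erase_eq_sub (Finset.mem_univ z), hs]
  rw [h3]
  have h4 : ∑ k, qvec ν k
      = ∑ X, ν X * ∑ i, ((if X i = 2 then (1:ℝ) else 0) + (if X i = 1 then 1 else 0)) := by
    rw [Fintype.sum_sum_type]
    show (∑ i, ∑ X, ν X * (if X i = 2 then (1:ℝ) else 0))
        + (∑ i, ∑ X, ν X * (if X i = 1 then (1:ℝ) else 0)) = _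
    rw [Finset.sum_comm, Finset.sum_comm (γ := Fin n)]
    rw [← Finset.sum_add_distrib]
    refine Finset.sum_congr rfl fun X _ => ?_
    rw [Finset.mul_sum, ← Finset.sum_add_distrib]
    exact Finset.sum_congr rfl fun i _ => by ring
  rw [h4]
  have h5 : ∀ x, 0 ≤ ν x * ∑ i, ((if x i = 2 then (1:ℝ) else 0) + (if x i = 1 then 1 else 0)) :=
    fun x => mul_nonneg (hν x) (Finset.sum_nonneg fun i _ => by split_ifs <;> norm_num)
  refine le_trans (Finset.sum_le_sum ?_)
    (Finset.sum_le_sum_of_subset_of_nonneg (Finset.subset_univ _) fun x _ _ => h5 x)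
  intro x hx
  have hxz : x ≠ z := Finset.ne_of_mem_erase hx
  obtain ⟨i, hi⟩ : ∃ i, x i ≠ 0 := by
    by_contra h
    push_neg at h
    exact hxz (funext h)
  have hterm : (1:ℝ) ≤ (if x i = 2 then (1:ℝ) else 0) + (if x i = 1 then 1 else 0) := by
    rcases fin3_cases (x i) with h | h | h
    · exact absurd h hi
    · rw [h]; norm_num [Fin.ext_iff]
    · rw [h]; norm_num [Fin.ext_iff]
  have hc : (1:ℝ) ≤ ∑ i, ((if x i = 2 then (1:ℝ) else 0) + (if x i = 1 then 1 else 0)) :=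
    le_trans hterm (Finset.single_le_sum (f := fun i =>
      (if x i = 2 then (1:ℝ) else 0) + (if x i = 1 then 1 else 0))
      (fun j _ => by split_ifs <;> norm_num) (Finset.mem_univ i))
  nlinarith [hν x]

lemma specNorm_eq {m : Type*} [Fintype m] [DecidableEq m] (M : Matrix m m ℝ) :
    specNorm M = ‖Matrix.toEuclideanCLM (𝕜 := ℝ) (n := m) M‖ := rfl

lemma specNorm_pow_le {m : Type*} [Fintype m] [DecidableEq m] (M : Matrix m m ℝ) (t : ℕ) :
    specNorm (M ^ t) ≤ specNorm M ^ t := by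
  rw [specNorm_eq, specNorm_eq, map_pow]
  induction t with
  | zero =>
    rw [pow_zero, pow_zero]
    rw [show (1 : EuclideanSpace ℝ m →L[ℝ] EuclideanSpace ℝ m) = ContinuousLinearMap.id ℝ _
      from rfl]
    exact ContinuousLinearMap.norm_id_le
  | succ t ih =>
    rw [pow_succ, pow_succ]
    exact le_trans (norm_mul_le _ _)
      (mul_le_mul ih le_rfl (norm_nonneg _) (pow_nonneg (norm_nonneg _) _))

lemma sum_mulVec_le {m : Type*} [Fintype m] [DecidableEq m] (M : Matrix m m ℝ) (v : m → ℝ) :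
    ∑ k, (M *ᵥ v) k
      ≤ Real.sqrt (Fintype.card m) * (specNorm M * Real.sqrt (∑ k, (v k)^2)) := by
  classical
  set e : EuclideanSpace ℝ m := (WithLp.equiv 2 (m → ℝ)).symm (fun _ => 1) with he
  set w : EuclideanSpace ℝ m := (WithLp.equiv 2 (m → ℝ)).symm v with hw
  have happ : (Matrix.toEuclideanCLM (𝕜 := ℝ) M) w = (WithLp.equiv 2 (m → ℝ)).symm (M *ᵥ v) := by
    rw [hw]; rfl
  have h1 : ∑ k, (M *ᵥ v) k = (inner ℝ e ((Matrix.toEuclideanCLM (𝕜 := ℝ) M) w) : ℝ) := by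
    rw [happ, PiLp.inner_apply]
    simp [he, RCLike.inner_apply]
  have hne : ‖e‖ = Real.sqrt (Fintype.card m) := by
    rw [EuclideanSpace.norm_eq]
    simp [he]
  have hnw : ‖w‖ = Real.sqrt (∑ k, (v k)^2) := by
    rw [EuclideanSpace.norm_eq]
    congr 1
    refine Finset.sum_congr rfl fun k _ => ?_
    rw [hw]
    simp [Real.norm_eq_abs, sq_abs]
  calc ∑ k, (M *ᵥ v) k = (inner ℝ e ((Matrix.toEuclideanCLM (𝕜 := ℝ) M) w) : ℝ) := h1
    _ ≤ |(inner ℝ e ((Matrix.toEuclideanCLM (𝕜 := ℝ) M) w) : ℝ)| := le_abs_self _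
    _ ≤ ‖e‖ * ‖(Matrix.toEuclideanCLM (𝕜 := ℝ) M) w‖ := abs_real_inner_le_norm _ _
    _ ≤ ‖e‖ * (‖Matrix.toEuclideanCLM (𝕜 := ℝ) M‖ * ‖w‖) := by
        refine mul_le_mul_of_nonneg_left (ContinuousLinearMap.le_opNorm _ _) (norm_nonneg _)
    _ = Real.sqrt (Fintype.card m) * (specNorm M * Real.sqrt (∑ k, (v k)^2)) := by
        rw [hne, hnw, specNorm_eq]

end AuxT
section AuxL
variable {n : ℕ} (G : SimpleGraph (Fin n)) [DecidableRel G.Adj] {β δ γ : ℝ}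

lemma qvec_le_one (ν : (Fin n → Fin 3) → ℝ) (hν : ∀ X, 0 ≤ ν X)
    (hs : ∑ X, ν X = 1) (k : Fin n ⊕ Fin n) : qvec ν k ≤ 1 := by
  rcases k with i | i
  · have := qvec_pair_le_one ν hν hs i
    have := qvec_nonneg ν hν (Sum.inr i)
    linarith
  · have := qvec_pair_le_one ν hν hs i
    have := qvec_nonneg ν hν (Sum.inl i)
    linarith

lemma specNorm_lb (hn : 1 ≤ n) :
    (1:ℝ)/2 ≤ specNorm (sirsM G β δ γ) ^ 2 := by
  classical
  set i0 : Fin n := ⟨0, hn⟩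
  set M := sirsM G β δ γ with hM
  set w : EuclideanSpace ℝ (Fin n ⊕ Fin n) :=
    (WithLp.equiv 2 (Fin n ⊕ Fin n → ℝ)).symm (Pi.single (Sum.inr i0) 1) with hw
  have hwn : ‖w‖ = 1 := by
    rw [EuclideanSpace.norm_eq]
    have : ∀ k, ‖w k‖^2 = if k = Sum.inr i0 then (1:ℝ) else 0 := by
      intro k
      rw [hw]
      by_cases h : k = Sum.inr i0 <;> simp [h, Pi.single_apply]
    simp_rw [this]
    simp
  have happ : (Matrix.toEuclideanCLM (𝕜 := ℝ) M) w
      = (WithLp.equiv 2 (Fin n ⊕ Fin n → ℝ)).symm (M *ᵥ Pi.single (Sum.inr i0) 1) := by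
    rw [hw]; rfl
  have hMv : ∀ k, (M *ᵥ Pi.single (Sum.inr i0) 1) k = M k (Sum.inr i0) := by
    intro k; rw [Matrix.mulVec_single_one]; rfl
  have hd1 : M (Sum.inl i0) (Sum.inr i0) = δ := by
    simp [hM, sirsM, Matrix.one_apply]
  have hd2 : M (Sum.inr i0) (Sum.inr i0) = 1 - δ := by
    simp [hM, sirsM, Matrix.one_apply]
  have hlow : δ^2 + (1-δ)^2 ≤ ‖(Matrix.toEuclideanCLM (𝕜 := ℝ) M) w‖^2 := by
    have hsq : ‖(Matrix.toEuclideanCLM (𝕜 := ℝ) M) w‖^2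
        = ∑ k, ((Matrix.toEuclideanCLM (𝕜 := ℝ) M) w k)^2 := by
      rw [EuclideanSpace.norm_eq, Real.sq_sqrt (by positivity)]
      exact Finset.sum_congr rfl fun k _ => by rw [Real.norm_eq_abs, sq_abs]
    rw [hsq]
    have hval : ∀ k, ((Matrix.toEuclideanCLM (𝕜 := ℝ) M) w) k = M k (Sum.inr i0) := by
      intro k; rw [happ]; exact hMv k
    simp_rw [hval]
    have hsub : ({Sum.inl i0, Sum.inr i0} : Finset (Fin n ⊕ Fin n)) ⊆ Finset.univ :=
      Finset.subset_univ _
    have hpair : ∑ k ∈ ({Sum.inl i0, Sum.inr i0} : Finset (Fin n ⊕ Fin n)),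
        (M k (Sum.inr i0))^2 = δ^2 + (1-δ)^2 := by
      rw [Finset.sum_pair (by simp)]
      rw [hd1, hd2]
    calc δ^2 + (1-δ)^2 = _ := hpair.symm
      _ ≤ ∑ k, (M k (Sum.inr i0))^2 :=
        Finset.sum_le_sum_of_subset_of_nonneg hsub fun k _ _ => sq_nonneg _
  have hop : ‖(Matrix.toEuclideanCLM (𝕜 := ℝ) M) w‖ ≤ specNorm M := by
    calc ‖(Matrix.toEuclideanCLM (𝕜 := ℝ) M) w‖
        ≤ ‖Matrix.toEuclideanCLM (𝕜 := ℝ) M‖ * ‖w‖ := ContinuousLinearMap.le_opNorm _ _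
      _ = specNorm M := by rw [hwn, specNorm_eq]; ring
  have h0 : 0 ≤ ‖(Matrix.toEuclideanCLM (𝕜 := ℝ) M) w‖ := norm_nonneg _
  nlinarith [sq_nonneg (δ - 1/2)]

end AuxL

set_option maxHeartbeats 1600000

/-- `π` (the point mass on the all-susceptible state) is stationary for the
SIRS chain; for every `t` and every initial distribution `μ`,
`‖μSᵗ − π‖_TV ≤ 1ᵀ Mᵗ 1 ≤ 2n ‖M‖ᵗ`; consequently, if `‖M‖ < 1`, then for every `ε ∈ (0,1)`,
`t_mix(ε) ≤ log(2n/ε)/(−log ‖M‖)`, i.e. the mixing time is `O(log n)`. -/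
theorem stmt14 {n : ℕ} (hn : 1 ≤ n) (G : SimpleGraph (Fin n)) [DecidableRel G.Adj]
    (hG : G.Connected) (β δ γ : ℝ) (hβ : β ∈ Set.Ioo (0 : ℝ) 1)
    (hδ : δ ∈ Set.Ioo (0 : ℝ) 1) (hγ : γ ∈ Set.Ioo (0 : ℝ) 1) :
    (sirsPi n ᵥ* sirsTrans G β δ γ = sirsPi n) ∧
    (∀ t : ℕ, ∀ μ : (Fin n → Fin 3) → ℝ, (∀ X, 0 ≤ μ X) → ∑ X, μ X = 1 →
      tvDist (μ ᵥ* (sirsTrans G β δ γ ^ t)) (sirsPi n) ≤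
        ∑ i, ∑ j, (sirsM G β δ γ ^ t) i j) ∧
    (∀ t : ℕ, ∑ i, ∑ j, (sirsM G β δ γ ^ t) i j ≤
      (2 * n : ℝ) * specNorm (sirsM G β δ γ) ^ t) ∧
    (specNorm (sirsM G β δ γ) < 1 → ∀ ε ∈ Set.Ioo (0 : ℝ) 1,
      (sirsMix G β δ γ ε : ℝ) ≤
        Real.log (2 * n / ε) / (- Real.log (specNorm (sirsM G β δ γ)))) := by
  classical
  set z : Fin n → Fin 3 := fun _ => 0 with hzdef
  -- key: TV at time t is at most sum of (M^t *ᵥ qvec μ)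
  have hkey : ∀ t : ℕ, ∀ μ : (Fin n → Fin 3) → ℝ, (∀ X, 0 ≤ μ X) → ∑ X, μ X = 1 →
      tvDist (μ ᵥ* (sirsTrans G β δ γ ^ t)) (sirsPi n)
        ≤ ∑ k, ((sirsM G β δ γ ^ t) *ᵥ qvec μ) k := by
    intro t μ hμ0 hμ1
    calc tvDist (μ ᵥ* (sirsTrans G β δ γ ^ t)) (sirsPi n)
        ≤ ∑ k, qvec (μ ᵥ* (sirsTrans G β δ γ ^ t)) k :=
          tvDist_le_qsum _ (dist_pow_nonneg G hβ hδ hγ μ hμ0 t) (dist_pow_sum G μ hμ1 t)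
      _ ≤ ∑ k, ((sirsM G β δ γ ^ t) *ᵥ qvec μ) k :=
          Finset.sum_le_sum fun k _ => qvec_pow_le G hβ hδ hγ μ hμ0 t k
  have hsum1 : ∀ t : ℕ, ∑ k, ((sirsM G β δ γ ^ t) *ᵥ (fun _ => (1:ℝ))) k
      = ∑ i, ∑ j, (sirsM G β δ γ ^ t) i j := by
    intro t
    simp [Matrix.mulVec, dotProduct]
  have hcard : (Fintype.card (Fin n ⊕ Fin n) : ℝ) = 2 * n := by
    simp; ring
  refine ⟨?_, ?_, ?_, ?_⟩
  · -- stationarity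
    funext Y
    have h1 : (sirsPi n ᵥ* sirsTrans G β δ γ) Y = sirsTrans G β δ γ z Y := by
      simp only [Matrix.vecMul, dotProduct, sirsPi, ite_mul, one_mul, zero_mul]
      rw [Finset.sum_ite_eq' Finset.univ z (fun X => sirsTrans G β δ γ X Y)]
      simp [hzdef]
    rw [h1]
    have hnum0 : ∀ i, numInf3 G z i = 0 := by
      intro i
      simp [numInf3, hzdef]
    by_cases hY : Y = z
    · subst hY
      rw [sirsTrans_apply]
      have : ∀ i, nodeK G β δ γ z i (z i) = 1 := by
        intro i
        simp [nodeK, hzdef, hnum0, (by simpa [hzdef] using hnum0 i : numInf3 G (fun _ => (0:Fin 3)) i = 0)]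
      rw [Finset.prod_congr rfl fun i _ => this i]
      simp [sirsPi, hzdef]
    · obtain ⟨i, hi⟩ : ∃ i, Y i ≠ 0 := by
        by_contra h
        push_neg at h
        exact hY (funext h)
      rw [sirsTrans_apply]
      rw [Finset.prod_eq_zero (Finset.mem_univ i)]
      · rw [sirsPi, if_neg hY]
      · rcases fin3_cases (Y i) with h | h | h
        · exact absurd h hi
        · simp [nodeK, hzdef, hnum0, h, (by simpa [hzdef] using hnum0 i : numInf3 G (fun _ => (0:Fin 3)) i = 0)]
        · simp [nodeK, hzdef, hnum0, h, (by simpa [hzdef] using hnum0 i : numInf3 G (fun _ => (0:Fin 3)) i = 0)]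
  · -- part 2
    intro t μ hμ0 hμ1
    refine le_trans (hkey t μ hμ0 hμ1) ?_
    rw [← hsum1 t]
    refine Finset.sum_le_sum fun k _ => ?_
    exact mulVec_mono (pow_entry_nonneg (sirsM_nonneg G hβ hδ hγ) t)
      (fun l => qvec_le_one μ hμ0 hμ1 l) k
  · -- part 3
    intro t
    have h1 := sum_mulVec_le (sirsM G β δ γ ^ t) (fun _ => (1:ℝ))
    rw [hsum1 t] at h1
    have h2 : ∑ k : Fin n ⊕ Fin n, ((fun _ => (1:ℝ)) k)^2 = 2 * n := by
      rw [← hcard]; simp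
    rw [h2, hcard] at h1
    have hss : Real.sqrt (2*n) * Real.sqrt (2*n) = 2*n :=
      Real.mul_self_sqrt (by positivity)
    have h3 : specNorm (sirsM G β δ γ ^ t) ≤ specNorm (sirsM G β δ γ) ^ t :=
      specNorm_pow_le _ t
    have h4 : (0:ℝ) ≤ Real.sqrt (2*n) := Real.sqrt_nonneg _
    calc ∑ i, ∑ j, (sirsM G β δ γ ^ t) i j
        ≤ Real.sqrt (2*n) * (specNorm (sirsM G β δ γ ^ t) * Real.sqrt (2*n)) := h1
      _ ≤ Real.sqrt (2*n) * (specNorm (sirsM G β δ γ) ^ t * Real.sqrt (2*n)) := by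
          have h5 : (0:ℝ) ≤ specNorm (sirsM G β δ γ) ^ t :=
            pow_nonneg (by rw [specNorm_eq]; exact norm_nonneg _) t
          nlinarith
      _ = (Real.sqrt (2*n) * Real.sqrt (2*n)) * specNorm (sirsM G β δ γ) ^ t := by ring
      _ = (2 * n : ℝ) * specNorm (sirsM G β δ γ) ^ t := by rw [hss]
  · -- part 4
    intro hr1 ε hε
    obtain ⟨hε0, hε1⟩ := hε
    set r := specNorm (sirsM G β δ γ) with hrdef
    have hr2 : 1/2 ≤ r^2 := specNorm_lb G hn
    have hrnn : 0 ≤ r := by rw [hrdef, specNorm_eq]; exact norm_nonneg _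
    have hr0 : 0 < r := by nlinarith
    have hlogr : Real.log r < 0 := Real.log_neg hr0 hr1
    set L := Real.log (2*n/ε) / (-Real.log r) with hLdef
    have hn1 : (1:ℝ) ≤ n := by exact_mod_cast hn
    have hfrac1 : (1:ℝ) ≤ 2*n/ε := by
      rw [le_div_iff₀ hε0]
      nlinarith
    have hnum : 0 ≤ Real.log (2*n/ε) := Real.log_nonneg hfrac1
    have hL0 : 0 ≤ L := div_nonneg hnum (by linarith)
    set t0 := ⌊L⌋₊ with ht0def
    -- r ^ t0 ≤ ε * √2 / (2 * n)
    have hs2 : Real.sqrt 2 * Real.sqrt 2 = 2 := Real.mul_self_sqrt (by norm_num)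
    have hs2nn : 0 ≤ Real.sqrt 2 := Real.sqrt_nonneg _
    have hrs2 : 1 ≤ r * Real.sqrt 2 := by nlinarith
    have hrL : r ^ (L:ℝ) = ε / (2*n) := by
      rw [Real.rpow_def_of_pos hr0]
      have hlr : Real.log r ≠ 0 := ne_of_lt hlogr
      have : Real.log r * L = - Real.log (2*n/ε) := by
        rw [hLdef, div_neg, mul_neg, mul_div_assoc', mul_div_cancel_left₀ _ hlr]
      rw [this, Real.exp_neg, Real.exp_log (by positivity)]
      rw [inv_div]
    have hpowle : r ^ t0 ≤ (ε / (2*n)) / r := by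
      have ht0 : L - 1 ≤ (t0:ℝ) := by
        have := Nat.lt_floor_add_one L
        push_cast
        linarith
      calc r ^ t0 = r ^ ((t0:ℝ)) := (Real.rpow_natCast r t0).symm
        _ ≤ r ^ (L - 1 : ℝ) :=
            Real.rpow_le_rpow_of_exponent_ge hr0 (le_of_lt hr1) ht0
        _ = r ^ (L:ℝ) / r := by rw [Real.rpow_sub hr0, Real.rpow_one]
        _ = (ε / (2*n)) / r := by rw [hrL]
    have hmem : t0 ∈ {t : ℕ | ∀ μ : (Fin n → Fin 3) → ℝ, (∀ X, 0 ≤ μ X) → ∑ X, μ X = 1 →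
        tvDist (μ ᵥ* (sirsTrans G β δ γ ^ t)) (sirsPi n) ≤ ε} := by
      intro μ hμ0 hμ1
      have h1 := hkey t0 μ hμ0 hμ1
      have h2 := sum_mulVec_le (sirsM G β δ γ ^ t0) (qvec μ)
      rw [hcard] at h2
      have hq2 : ∑ k, (qvec μ k)^2 ≤ (n:ℝ) := by
        rw [Fintype.sum_sum_type]
        have h3 : ∀ i : Fin n, (qvec μ (Sum.inl i))^2 + (qvec μ (Sum.inr i))^2 ≤ 1 := by
          intro i
          have ha := qvec_nonneg μ hμ0 (Sum.inl i)
          have hb := qvec_nonneg μ hμ0 (Sum.inr i)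
          have hab := qvec_pair_le_one μ hμ0 hμ1 i
          nlinarith
        calc (∑ i, (qvec μ (Sum.inl i))^2) + (∑ i, (qvec μ (Sum.inr i))^2)
            = ∑ i : Fin n, ((qvec μ (Sum.inl i))^2 + (qvec μ (Sum.inr i))^2) := by
              rw [Finset.sum_add_distrib]
          _ ≤ ∑ i : Fin n, (1:ℝ) := Finset.sum_le_sum fun i _ => h3 i
          _ = (n:ℝ) := by simp
      have hq2' : Real.sqrt (∑ k, (qvec μ k)^2) ≤ Real.sqrt n := Real.sqrt_le_sqrt hq2
      have hsplit : Real.sqrt (2*n) = Real.sqrt 2 * Real.sqrt n := by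
        rw [← Real.sqrt_mul (by norm_num)]
      have hsn : Real.sqrt n * Real.sqrt n = (n:ℝ) := Real.mul_self_sqrt (by positivity)
      have hsnnn : 0 ≤ Real.sqrt (n:ℝ) := Real.sqrt_nonneg _
      have hspec : specNorm (sirsM G β δ γ ^ t0) ≤ r ^ t0 := specNorm_pow_le _ t0
      have hspecnn : 0 ≤ specNorm (sirsM G β δ γ ^ t0) := by
        rw [specNorm_eq]; exact norm_nonneg _
      have hqsnn : 0 ≤ Real.sqrt (∑ k, (qvec μ k)^2) := Real.sqrt_nonneg _
      have hrtnn : 0 ≤ r ^ t0 := pow_nonneg hrnn t0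
      calc tvDist (μ ᵥ* (sirsTrans G β δ γ ^ t0)) (sirsPi n)
          ≤ ∑ k, ((sirsM G β δ γ ^ t0) *ᵥ qvec μ) k := h1
        _ ≤ Real.sqrt (2*n) * (specNorm (sirsM G β δ γ ^ t0)
              * Real.sqrt (∑ k, (qvec μ k)^2)) := h2
        _ ≤ Real.sqrt (2*n) * (r ^ t0 * Real.sqrt n) := by
            refine mul_le_mul_of_nonneg_left ?_ (Real.sqrt_nonneg _)
            exact mul_le_mul hspec hq2' hqsnn hrtnn
        _ = Real.sqrt 2 * (n:ℝ) * r ^ t0 := by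
            rw [hsplit]
            calc Real.sqrt 2 * Real.sqrt n * (r ^ t0 * Real.sqrt n)
                = Real.sqrt 2 * (Real.sqrt n * Real.sqrt n) * r ^ t0 := by ring
              _ = Real.sqrt 2 * (n:ℝ) * r ^ t0 := by rw [hsn]
        _ ≤ Real.sqrt 2 * (n:ℝ) * ((ε / (2*n)) / r) := by
            refine mul_le_mul_of_nonneg_left hpowle
              (mul_nonneg hs2nn (Nat.cast_nonneg n))
        _ ≤ ε := by
            have hn0 : (0:ℝ) ≤ (n:ℝ) := by positivity
            have hsr : Real.sqrt 2 ≤ 2*r := by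
              have h := mul_le_mul_of_nonneg_right hrs2 hs2nn
              nlinarith [hs2]
            rw [div_div, ← mul_div_assoc, div_le_iff₀ (by positivity : (0:ℝ) < 2*(n:ℝ)*r)]
            nlinarith [mul_nonneg (mul_nonneg hε0.le hn0) (sub_nonneg.mpr hsr)]
    have hle : sirsMix G β δ γ ε ≤ t0 := Nat.sInf_le hmem
    calc (sirsMix G β δ γ ε : ℝ) ≤ (t0 : ℝ) := by exact_mod_cast hle
      _ ≤ L := Nat.floor_le hL0
end

section
/- Consider the vaccination-dominant SIV nonlinear map F_VD on D. The point (P_R, P_I) = ((θ/(γ+θ))1_n, 0_n) is a fixed point of F_VD (the disease-free fixed point), and: (a) if (1−θ)·(γ/(γ+θ))·(β/δ)·λmax(A) < 1, then it is locally stable, i.e. there is a relatively open neighborhood U of it in D such that F_VD^t(x) converges to it as t → ∞ for every x ∈ U; (b) if (1−θ)·(β/δ)·λmax(A) < 1, then it is globally stable, i.e. F_VD^t(x) converges to it for every x ∈ D. -/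
open Matrix Finset

/-- The domain `D = {(P_R, P_I) ∈ [0,1]^n × [0,1]^n : P_R + P_I ⪯ 1}`. -/
def sivD (n : ℕ) : Set ((Fin n → ℝ) × (Fin n → ℝ)) :=
  {p | p.1 ∈ Set.Icc (0 : Fin n → ℝ) 1 ∧ p.2 ∈ Set.Icc (0 : Fin n → ℝ) 1 ∧
    ∀ i, p.1 i + p.2 i ≤ 1}

/-- The vaccination-dominant SIV nonlinear (mean-field) map `F_VD(P_R, P_I)`:
`P_R,i′ = (1−γ)P_R,i + δ P_I,i + θ(1 − P_R,i − P_I,i)` and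
`P_I,i′ = (1−δ)P_I,i + (1−θ)(1 − ∏_{j∈N_i}(1−β P_I,j))(1 − P_R,i − P_I,i)`. -/
noncomputable def sivFVD {n : ℕ} (G : SimpleGraph (Fin n)) [DecidableRel G.Adj]
    (β δ γ θ : ℝ) (p : (Fin n → ℝ) × (Fin n → ℝ)) : (Fin n → ℝ) × (Fin n → ℝ) :=
  (fun i => (1 - γ) * p.1 i + δ * p.2 i + θ * (1 - p.1 i - p.2 i),
   fun i => (1 - δ) * p.2 i +
      (1 - θ) * (1 - ∏ j ∈ G.neighborFinset i, (1 - β * p.2 j)) * (1 - p.1 i - p.2 i))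

/-- The disease-free point `((θ/(γ+θ))1_n, 0_n)`. -/
noncomputable def sivDFP (n : ℕ) (γ θ : ℝ) : (Fin n → ℝ) × (Fin n → ℝ) :=
  (fun _ => θ / (γ + θ), fun _ => 0)

/-! ### Auxiliary lemmas -/

/-- Weierstrass-type inequality: `1 - ∏ (1 - f j) ≤ ∑ f j` for `f j ∈ [0,1]`. -/
lemma siv_one_sub_prod_le_sum {ι : Type*} [DecidableEq ι] (s : Finset ι) (f : ι → ℝ)
    (h0 : ∀ j ∈ s, 0 ≤ f j) (h1 : ∀ j ∈ s, f j ≤ 1) :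
    1 - ∏ j ∈ s, (1 - f j) ≤ ∑ j ∈ s, f j := by
  induction s using Finset.induction_on with
  | empty => simp
  | @insert a s ha ih =>
    rw [Finset.prod_insert ha, Finset.sum_insert ha]
    have hP0 : (0:ℝ) ≤ ∏ j ∈ s, (1 - f j) :=
      Finset.prod_nonneg fun j hj => by
        have := h1 j (Finset.mem_insert_of_mem hj); linarith
    have hP1 : ∏ j ∈ s, (1 - f j) ≤ 1 :=
      Finset.prod_le_one (fun j hj => by
        have := h1 j (Finset.mem_insert_of_mem hj); linarith)
        (fun j hj => by have := h0 j (Finset.mem_insert_of_mem hj); linarith)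
    have iha := ih (fun j hj => h0 j (Finset.mem_insert_of_mem hj))
      (fun j hj => h1 j (Finset.mem_insert_of_mem hj))
    have ha0 := h0 a (Finset.mem_insert_self a s)
    nlinarith [mul_le_of_le_one_right ha0 hP1]

section Spectral

variable {n : ℕ} (G : SimpleGraph (Fin n)) [DecidableRel G.Adj]

lemma siv_adj_isHermitian : (G.adjMatrix ℝ).IsHermitian := by
  show (G.adjMatrix ℝ)ᴴ = G.adjMatrix ℝ
  ext i j
  simp [Matrix.conjTranspose_apply, SimpleGraph.adj_comm]

lemma siv_eig_dot (x : Fin n → ℝ) (i : Fin n) :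
    ⇑((siv_adj_isHermitian G).eigenvectorBasis i) ⬝ᵥ (G.adjMatrix ℝ *ᵥ x) =
      (siv_adj_isHermitian G).eigenvalues i *
        (⇑((siv_adj_isHermitian G).eigenvectorBasis i) ⬝ᵥ x) := by
  have h1 : ⇑((siv_adj_isHermitian G).eigenvectorBasis i) ⬝ᵥ (G.adjMatrix ℝ *ᵥ x) =
      (G.adjMatrix ℝ *ᵥ ⇑((siv_adj_isHermitian G).eigenvectorBasis i)) ⬝ᵥ x := by
    rw [Matrix.dotProduct_mulVec, ← Matrix.mulVec_transpose, G.transpose_adjMatrix]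
  rw [h1, (siv_adj_isHermitian G).mulVec_eigenvectorBasis, smul_dotProduct,
    smul_eq_mul]

lemma siv_parseval (y z : Fin n → ℝ) :
    y ⬝ᵥ z = ∑ i, (⇑((siv_adj_isHermitian G).eigenvectorBasis i) ⬝ᵥ y) *
      (⇑((siv_adj_isHermitian G).eigenvectorBasis i) ⬝ᵥ z) := by
  classical
  have h := ((siv_adj_isHermitian G).eigenvectorBasis).sum_inner_mul_inner
    ((WithLp.equiv 2 (Fin n → ℝ)).symm y) ((WithLp.equiv 2 (Fin n → ℝ)).symm z)
  simp only [PiLp.inner_apply, RCLike.inner_apply, conj_trivial,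
    WithLp.equiv_symm_apply, WithLp.ofLp_toLp] at h
  simp only [dotProduct]
  rw [show (∑ x, y x * z x) = ∑ x, z x * y x from Finset.sum_congr rfl fun x _ => mul_comm _ _]
  rw [← h]
  apply Finset.sum_congr rfl
  intro i _
  congr 1
  exact Finset.sum_congr rfl fun x _ => mul_comm _ _

lemma siv_basis_dot_self (i : Fin n) :
    ⇑((siv_adj_isHermitian G).eigenvectorBasis i) ⬝ᵥ
      ⇑((siv_adj_isHermitian G).eigenvectorBasis i) = 1 := by
  have h := ((siv_adj_isHermitian G).eigenvectorBasis).orthonormal.1 i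
  have : (inner ℝ ((siv_adj_isHermitian G).eigenvectorBasis i)
      ((siv_adj_isHermitian G).eigenvectorBasis i) : ℝ) = 1 := by
    rw [@real_inner_self_eq_norm_sq]
    rw [h]; norm_num
  rw [← this]
  simp only [PiLp.inner_apply, dotProduct, RCLike.inner_apply, conj_trivial]

lemma siv_bddAbove_spectrum : BddAbove (spectrum ℝ (G.adjMatrix ℝ)) :=
  ((G.adjMatrix ℝ).finite_spectrum).bddAbove

lemma siv_eig_le (i : Fin n) :
    (siv_adj_isHermitian G).eigenvalues i ≤ lamMax (G.adjMatrix ℝ) :=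
  le_csSup (siv_bddAbove_spectrum G) ((siv_adj_isHermitian G).eigenvalues_mem_spectrum_real i)

lemma siv_rayleigh (x : Fin n → ℝ) :
    x ⬝ᵥ (G.adjMatrix ℝ *ᵥ x) ≤ lamMax (G.adjMatrix ℝ) * (x ⬝ᵥ x) := by
  rw [siv_parseval G x (G.adjMatrix ℝ *ᵥ x), siv_parseval G x x, Finset.mul_sum]
  apply Finset.sum_le_sum
  intro i _
  rw [siv_eig_dot]
  have h := siv_eig_le G i
  nlinarith [sq_nonneg (⇑((siv_adj_isHermitian G).eigenvectorBasis i) ⬝ᵥ x)]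

lemma siv_dot_nonneg_entries (x : Fin n → ℝ) :
    -((fun j => |x j|) ⬝ᵥ (G.adjMatrix ℝ *ᵥ (fun j => |x j|))) ≤ x ⬝ᵥ (G.adjMatrix ℝ *ᵥ x) := by
  simp only [dotProduct, Matrix.mulVec, Finset.mul_sum, ← Finset.sum_neg_distrib]
  apply Finset.sum_le_sum; intro j _
  apply Finset.sum_le_sum; intro k _
  have hjk : (0:ℝ) ≤ G.adjMatrix ℝ j k := by simp [SimpleGraph.adjMatrix_apply]; positivity
  have : |x j * (G.adjMatrix ℝ j k * x k)| = |x j| * (G.adjMatrix ℝ j k * |x k|) := by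
    rw [abs_mul, abs_mul, abs_of_nonneg hjk]
  nlinarith [neg_abs_le (x j * (G.adjMatrix ℝ j k * x k))]

lemma siv_abs_eig_le (hn : 1 ≤ n) (i : Fin n) :
    |(siv_adj_isHermitian G).eigenvalues i| ≤ lamMax (G.adjMatrix ℝ) := by
  set t := ⇑((siv_adj_isHermitian G).eigenvectorBasis i) with ht
  have htt : t ⬝ᵥ t = 1 := siv_basis_dot_self G i
  have h1 : t ⬝ᵥ (G.adjMatrix ℝ *ᵥ t) = (siv_adj_isHermitian G).eigenvalues i := by
    rw [(siv_adj_isHermitian G).mulVec_eigenvectorBasis, dotProduct_smul, smul_eq_mul,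
      ← ht, htt, mul_one]
  have habs : (fun j => |t j|) ⬝ᵥ (fun j => |t j|) = 1 := by
    rw [← htt]; simp [dotProduct, abs_mul_abs_self]
  have h2 := siv_dot_nonneg_entries G t
  have h3 := siv_rayleigh G (fun j => |t j|)
  rw [habs, mul_one] at h3
  have hlow : -(lamMax (G.adjMatrix ℝ)) ≤ (siv_adj_isHermitian G).eigenvalues i := by
    rw [← h1]; linarith
  exact abs_le.mpr ⟨hlow, siv_eig_le G i⟩

lemma siv_lamMax_nonneg (hn : 1 ≤ n) : 0 ≤ lamMax (G.adjMatrix ℝ) := by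
  classical
  -- sum of eigenvalues equals trace = 0
  have key : ∀ j : Fin n, Pi.single j (1:ℝ) ⬝ᵥ (G.adjMatrix ℝ *ᵥ Pi.single j 1) =
      ∑ i, (siv_adj_isHermitian G).eigenvalues i *
        ((⇑((siv_adj_isHermitian G).eigenvectorBasis i) ⬝ᵥ Pi.single j 1) *
         (⇑((siv_adj_isHermitian G).eigenvectorBasis i) ⬝ᵥ Pi.single j 1)) := by
    intro j
    rw [siv_parseval G (Pi.single j 1) (G.adjMatrix ℝ *ᵥ Pi.single j 1)]
    apply Finset.sum_congr rfl
    intro i _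
    rw [siv_eig_dot]; ring
  have hdiag : ∀ j : Fin n, Pi.single j (1:ℝ) ⬝ᵥ (G.adjMatrix ℝ *ᵥ Pi.single j 1) = 0 := by
    intro j
    simp only [dotProduct, Matrix.mulVec, Pi.single_apply, SimpleGraph.adjMatrix_apply]
    apply Finset.sum_eq_zero
    intro x _
    by_cases hx : x = j
    · subst hx; simp
    · simp [hx]
  have hsum : ∑ i, (siv_adj_isHermitian G).eigenvalues i = 0 := by
    have hswap : ∑ j : Fin n, ∑ i : Fin n, (siv_adj_isHermitian G).eigenvalues i *
        ((⇑((siv_adj_isHermitian G).eigenvectorBasis i) ⬝ᵥ Pi.single j 1) *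
         (⇑((siv_adj_isHermitian G).eigenvectorBasis i) ⬝ᵥ Pi.single j 1)) = 0 := by
      rw [← Finset.sum_congr rfl (fun j _ => key j)]
      simp [hdiag]
    rw [Finset.sum_comm] at hswap
    rw [← hswap]
    apply Finset.sum_congr rfl
    intro i _
    have : ∑ j : Fin n, ((⇑((siv_adj_isHermitian G).eigenvectorBasis i) ⬝ᵥ Pi.single j 1) *
        (⇑((siv_adj_isHermitian G).eigenvectorBasis i) ⬝ᵥ Pi.single j 1)) =
        ⇑((siv_adj_isHermitian G).eigenvectorBasis i) ⬝ᵥ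
          ⇑((siv_adj_isHermitian G).eigenvectorBasis i) := by
      have hdot : ∀ j : Fin n, ⇑((siv_adj_isHermitian G).eigenvectorBasis i) ⬝ᵥ
          Pi.single j (1:ℝ) = ⇑((siv_adj_isHermitian G).eigenvectorBasis i) j := by
        intro j
        simp [dotProduct, Pi.single_apply]
      simp only [hdot]
      simp [dotProduct]
    rw [← Finset.mul_sum, this, siv_basis_dot_self, mul_one]
  by_contra hneg
  push_neg at hneg
  have : ∀ i ∈ Finset.univ (α := Fin n), (siv_adj_isHermitian G).eigenvalues i < 0 := by
    intro i _
    exact lt_of_le_of_lt (siv_eig_le G i) hneg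
  have hne : (Finset.univ (α := Fin n)).Nonempty := by
    have : Nonempty (Fin n) := ⟨⟨0, hn⟩⟩
    exact Finset.univ_nonempty
  have := Finset.sum_neg this hne
  linarith [hsum]

lemma siv_norm_mulVec (hn : 1 ≤ n) (x : Fin n → ℝ) :
    (G.adjMatrix ℝ *ᵥ x) ⬝ᵥ (G.adjMatrix ℝ *ᵥ x) ≤
      (lamMax (G.adjMatrix ℝ))^2 * (x ⬝ᵥ x) := by
  rw [siv_parseval G (G.adjMatrix ℝ *ᵥ x) (G.adjMatrix ℝ *ᵥ x), siv_parseval G x x,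
    Finset.mul_sum]
  apply Finset.sum_le_sum
  intro i _
  rw [siv_eig_dot]
  have h := siv_abs_eig_le G hn i
  have h2 : ((siv_adj_isHermitian G).eigenvalues i)^2 ≤ (lamMax (G.adjMatrix ℝ))^2 := by
    have := abs_nonneg ((siv_adj_isHermitian G).eigenvalues i)
    nlinarith [sq_abs ((siv_adj_isHermitian G).eigenvalues i)]
  nlinarith [sq_nonneg (⇑((siv_adj_isHermitian G).eigenvectorBasis i) ⬝ᵥ x)]

/-- Existence of a positive "Perron-like" comparison vector. -/
lemma siv_exists_v (hn : 1 ≤ n) {lam : ℝ} (hlt : lamMax (G.adjMatrix ℝ) < lam) :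
    ∃ v : Fin n → ℝ, (∀ i, 1 ≤ v i) ∧
      (∀ i, ∑ j ∈ G.neighborFinset i, v j ≤ lam * v i) := by
  classical
  set L := lamMax (G.adjMatrix ℝ) with hL
  have hL0 : 0 ≤ L := siv_lamMax_nonneg G hn
  have hlam0 : 0 < lam := lt_of_le_of_lt hL0 hlt
  set w : ℕ → Fin n → ℝ := fun k => (G.adjMatrix ℝ)^k *ᵥ (fun _ => 1) with hw
  have hw0 : w 0 = fun _ => (1:ℝ) := by simp [hw]
  have hwsucc : ∀ k, w (k+1) = G.adjMatrix ℝ *ᵥ (w k) := by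
    intro k
    rw [hw]
    show ((G.adjMatrix ℝ)^(k+1)) *ᵥ (fun _ => 1) = _
    rw [pow_succ', Matrix.mulVec_mulVec]
  have hwnonneg : ∀ k i, 0 ≤ w k i := by
    intro k
    induction k with
    | zero => intro i; rw [hw0]; norm_num
    | succ k ih =>
      intro i
      rw [hwsucc k]
      rw [SimpleGraph.adjMatrix_mulVec_apply]
      exact Finset.sum_nonneg fun j _ => ih j
  have hwnormsq : ∀ k, w k ⬝ᵥ w k ≤ L^(2*k) * n := by
    intro k
    induction k with
    | zero => simp [hw0, dotProduct]
    | succ k ih =>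
      rw [hwsucc k]
      calc (G.adjMatrix ℝ *ᵥ w k) ⬝ᵥ (G.adjMatrix ℝ *ᵥ w k)
          ≤ L^2 * (w k ⬝ᵥ w k) := siv_norm_mulVec G hn (w k)
        _ ≤ L^2 * (L^(2*k) * n) := by
            apply mul_le_mul_of_nonneg_left ih (by positivity)
        _ = L^(2*(k+1)) * n := by ring
  have hwentry : ∀ k i, w k i ≤ L^k * Real.sqrt n := by
    intro k i
    have h1 : (w k i)^2 ≤ L^(2*k) * n := by
      have h2' : w k i * w k i ≤ ∑ x, w k x * w k x := by
        simpa using Finset.single_le_sum (f := fun j => w k j * w k j)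
          (fun j _ => mul_self_nonneg (w k j)) (Finset.mem_univ i)
      have : (w k i)^2 ≤ w k ⬝ᵥ w k := by
        rw [dotProduct]
        nlinarith [h2']
      linarith [hwnormsq k]
    have h2 : w k i ≤ Real.sqrt (L^(2*k) * n) := by
      calc w k i = Real.sqrt ((w k i)^2) := (Real.sqrt_sq (hwnonneg k i)).symm
        _ ≤ _ := Real.sqrt_le_sqrt h1
    calc w k i ≤ Real.sqrt (L^(2*k) * n) := h2
      _ = L^k * Real.sqrt n := by
          rw [Real.sqrt_mul (by positivity)]
          congr 1
          rw [show 2*k = k*2 by ring, pow_mul, Real.sqrt_sq (by positivity)]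
  -- choose K ≥ 1 with L^K * sqrt n ≤ lam^K
  have hratio : Filter.Tendsto (fun K : ℕ => (L/lam)^K * Real.sqrt n)
      Filter.atTop (nhds 0) := by
    have h1 : Filter.Tendsto (fun K : ℕ => (L/lam)^K) Filter.atTop (nhds 0) :=
      tendsto_pow_atTop_nhds_zero_of_lt_one (by positivity) ((div_lt_one hlam0).mpr hlt)
    simpa using h1.mul_const (Real.sqrt n)
  have hev : ∀ᶠ K : ℕ in Filter.atTop, (L/lam)^K * Real.sqrt n < 1 :=
    hratio.eventually_lt_const (by norm_num)
  obtain ⟨K0, hK0⟩ := hev.exists_forall_of_atTop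
  have hKbound : (L/lam)^(K0+1) * Real.sqrt n < 1 := hK0 (K0+1) (by omega)
  have hwK : ∀ i, w (K0+1) i ≤ lam^(K0+1) := by
    intro i
    have h1 := hwentry (K0+1) i
    have hx : (L/lam)^(K0+1) * lam^(K0+1) = L^(K0+1) := by
      rw [div_pow]
      field_simp
    have h3 := mul_lt_mul_of_pos_right hKbound (pow_pos hlam0 (K0+1))
    rw [one_mul] at h3
    have h2 : L^(K0+1) * Real.sqrt n < lam^(K0+1) := by
      calc L^(K0+1) * Real.sqrt n = (L/lam)^(K0+1) * Real.sqrt n * lam^(K0+1) := by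
            rw [← hx]; ring
        _ < lam^(K0+1) := h3
    linarith
  refine ⟨fun i => ∑ k ∈ Finset.range (K0+1), w k i / lam^k, ?_, ?_⟩
  · intro i
    show 1 ≤ ∑ k ∈ Finset.range (K0+1), w k i / lam^k
    rw [Finset.sum_range_succ']
    have h0 : w 0 i / lam^0 = 1 := by rw [hw0]; norm_num
    have hrest : 0 ≤ ∑ k ∈ Finset.range K0, w (k+1) i / lam^(k+1) :=
      Finset.sum_nonneg fun k _ => div_nonneg (hwnonneg _ _) (by positivity)
    rw [h0]
    linarith
  · intro i
    show ∑ j ∈ G.neighborFinset i, (∑ k ∈ Finset.range (K0+1), w k j / lam^k) ≤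
      lam * ∑ k ∈ Finset.range (K0+1), w k i / lam^k
    have hLHS : ∑ j ∈ G.neighborFinset i, (∑ k ∈ Finset.range (K0+1), w k j / lam^k) =
        ∑ k ∈ Finset.range (K0+1), w (k+1) i / lam^k := by
      rw [Finset.sum_comm]
      apply Finset.sum_congr rfl
      intro k _
      rw [← Finset.sum_div]
      congr 1
      rw [hwsucc k, SimpleGraph.adjMatrix_mulVec_apply]
    rw [hLHS, Finset.mul_sum]
    rw [Finset.sum_range_succ]  -- LHS : ∑_{k<K0} w(k+1) i /lam^k + w K i / lam^K0
    rw [Finset.sum_range_succ']  -- RHS : ∑_{k<K0} lam * (w (k+1) i / lam^(k+1)) + lam * (w 0 i / lam^0)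
    have hterm : ∀ k, lam * (w (k+1) i / lam^(k+1)) = w (k+1) i / lam^k := by
      intro k
      rw [pow_succ]
      field_simp
    have hsum_eq : ∑ k ∈ Finset.range K0, lam * (w (k+1) i / lam^(k+1)) =
        ∑ k ∈ Finset.range K0, w (k+1) i / lam^k :=
      Finset.sum_congr rfl fun k _ => hterm k
    rw [hsum_eq]
    have hlast : w (K0+1) i / lam^K0 ≤ lam * (w 0 i / lam^0) := by
      rw [hw0]
      simp only [pow_zero, div_one]
      rw [div_le_iff₀ (by positivity)]
      calc w (K0+1) i ≤ lam^(K0+1) := hwK i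
        _ = lam * 1 * lam^K0 := by rw [pow_succ]; ring
    linarith

end Spectral

section Dynamics

variable {n : ℕ} (G : SimpleGraph (Fin n)) [DecidableRel G.Adj] {β δ γ θ : ℝ}

/-- Invariance of the domain `D` under `F_VD`. -/
lemma siv_mem_D_invariant (hβ0 : 0 < β) (hβ1 : β < 1) (hδ0 : 0 < δ) (hδ1 : δ < 1)
    (hγ0 : 0 < γ) (hγ1 : γ < 1) (hθ0 : 0 < θ) (hθ1 : θ < 1)
    {p : (Fin n → ℝ) × (Fin n → ℝ)} (hp : p ∈ sivD n) :
    sivFVD G β δ γ θ p ∈ sivD n := by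
  obtain ⟨⟨hR0p, hR1p⟩, ⟨hI0p, hI1p⟩, hsum⟩ := hp
  have hR0' : ∀ i, (0:ℝ) ≤ p.1 i := fun i => by simpa using hR0p i
  have hI0' : ∀ i, (0:ℝ) ≤ p.2 i := fun i => by simpa using hI0p i
  have hI1' : ∀ i, p.2 i ≤ 1 := fun i => by simpa using hI1p i
  have hprod0 : ∀ i, 0 ≤ ∏ j ∈ G.neighborFinset i, (1 - β * p.2 j) := by
    intro i
    apply Finset.prod_nonneg
    intro j _
    nlinarith [hI0' j, hI1' j]
  have hprod1 : ∀ i, ∏ j ∈ G.neighborFinset i, (1 - β * p.2 j) ≤ 1 := by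
    intro i
    apply Finset.prod_le_one
    · intro j _; nlinarith [hI0' j, hI1' j]
    · intro j _; nlinarith [hI0' j]
  have hS0 : ∀ i, 0 ≤ 1 - p.1 i - p.2 i := fun i => by linarith [hsum i]
  have hRnn : ∀ i, (0:ℝ) ≤ (1 - γ) * p.1 i + δ * p.2 i + θ * (1 - p.1 i - p.2 i) := by
    intro i
    have e1 : (0:ℝ) ≤ (1 - γ) * p.1 i := mul_nonneg (by linarith) (hR0' i)
    have e2 : (0:ℝ) ≤ δ * p.2 i := mul_nonneg hδ0.le (hI0' i)
    have e3 : (0:ℝ) ≤ θ * (1 - p.1 i - p.2 i) := mul_nonneg hθ0.le (hS0 i)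
    linarith
  have hInn : ∀ i, (0:ℝ) ≤ (1 - δ) * p.2 i +
      (1 - θ) * (1 - ∏ j ∈ G.neighborFinset i, (1 - β * p.2 j)) * (1 - p.1 i - p.2 i) := by
    intro i
    have h1 : (0:ℝ) ≤ 1 - ∏ j ∈ G.neighborFinset i, (1 - β * p.2 j) := by
      linarith [hprod1 i]
    have e1 : (0:ℝ) ≤ (1 - δ) * p.2 i := mul_nonneg (by linarith) (hI0' i)
    have e2 : (0:ℝ) ≤ (1 - θ) * (1 - ∏ j ∈ G.neighborFinset i, (1 - β * p.2 j)) *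
        (1 - p.1 i - p.2 i) :=
      mul_nonneg (mul_nonneg (by linarith) h1) (hS0 i)
    linarith
  have hpos : ∀ i, (0:ℝ) ≤ γ * p.1 i + (1 - θ) *
      (∏ j ∈ G.neighborFinset i, (1 - β * p.2 j)) * (1 - p.1 i - p.2 i) := by
    intro i
    have e1 : (0:ℝ) ≤ γ * p.1 i := mul_nonneg hγ0.le (hR0' i)
    have e2 : (0:ℝ) ≤ (1 - θ) * (∏ j ∈ G.neighborFinset i, (1 - β * p.2 j)) *
        (1 - p.1 i - p.2 i) :=
      mul_nonneg (mul_nonneg (by linarith) (hprod0 i)) (hS0 i)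
    linarith
  have htot : ∀ i, (1 - γ) * p.1 i + δ * p.2 i + θ * (1 - p.1 i - p.2 i) +
      ((1 - δ) * p.2 i +
        (1 - θ) * (1 - ∏ j ∈ G.neighborFinset i, (1 - β * p.2 j)) * (1 - p.1 i - p.2 i)) =
      1 - (γ * p.1 i + (1 - θ) * (∏ j ∈ G.neighborFinset i, (1 - β * p.2 j)) *
        (1 - p.1 i - p.2 i)) := fun i => by ring
  refine ⟨⟨fun i => hRnn i, fun i => ?_⟩, ⟨fun i => hInn i, fun i => ?_⟩, fun i => ?_⟩
  · show (1 - γ) * p.1 i + δ * p.2 i + θ * (1 - p.1 i - p.2 i) ≤ 1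
    linarith [htot i, hpos i, hInn i]
  · show (1 - δ) * p.2 i +
        (1 - θ) * (1 - ∏ j ∈ G.neighborFinset i, (1 - β * p.2 j)) * (1 - p.1 i - p.2 i) ≤ 1
    linarith [htot i, hpos i, hRnn i]
  · show (1 - γ) * p.1 i + δ * p.2 i + θ * (1 - p.1 i - p.2 i) +
        ((1 - δ) * p.2 i +
          (1 - θ) * (1 - ∏ j ∈ G.neighborFinset i, (1 - β * p.2 j)) * (1 - p.1 i - p.2 i)) ≤ 1
    linarith [htot i, hpos i]

/-- One-step decay bound for the infected component. -/
lemma siv_stepI (hβ0 : 0 < β) (hβ1 : β < 1) (hδ0 : 0 < δ) (hδ1 : δ < 1)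
    (hθ0 : 0 < θ) (hθ1 : θ < 1)
    {lam c : ℝ} (hc0 : 0 ≤ c) (hlam0 : 0 < lam)
    {v : Fin n → ℝ} (hv1 : ∀ i, 1 ≤ v i)
    (hvA : ∀ i, ∑ j ∈ G.neighborFinset i, v j ≤ lam * v i)
    {p : (Fin n → ℝ) × (Fin n → ℝ)} {a : ℝ}
    (hp : p ∈ sivD n) (ha : 0 ≤ a)
    (hS : ∀ i, 1 - p.1 i - p.2 i ≤ c)
    (hI : ∀ i, p.2 i ≤ a * v i) :
    ∀ i, (sivFVD G β δ γ θ p).2 i ≤ ((1-δ) + (1-θ)*β*lam*c) * (a * v i) := by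
  obtain ⟨⟨hR0p, hR1p⟩, ⟨hI0p, hI1p⟩, hsum⟩ := hp
  have hR0 : ∀ i, (0:ℝ) ≤ p.1 i := fun i => by simpa using hR0p i
  have hI0 : ∀ i, (0:ℝ) ≤ p.2 i := fun i => by simpa using hI0p i
  have hI1 : ∀ i, p.2 i ≤ 1 := fun i => by simpa using hI1p i
  intro i
  have hvi : (0:ℝ) ≤ v i := le_trans zero_le_one (hv1 i)
  have hba : (0:ℝ) ≤ β * (a * (lam * v i)) :=
    mul_nonneg hβ0.le (mul_nonneg ha (mul_nonneg hlam0.le hvi))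
  show (1 - δ) * p.2 i +
      (1 - θ) * (1 - ∏ j ∈ G.neighborFinset i, (1 - β * p.2 j)) * (1 - p.1 i - p.2 i) ≤ _
  have hS0 : 0 ≤ 1 - p.1 i - p.2 i := by linarith [hsum i]
  have hq : 1 - ∏ j ∈ G.neighborFinset i, (1 - β * p.2 j) ≤
      β * (a * (lam * v i)) := by
    have h1 : 1 - ∏ j ∈ G.neighborFinset i, (1 - β * p.2 j) ≤
        ∑ j ∈ G.neighborFinset i, β * p.2 j := by
      apply siv_one_sub_prod_le_sum
      · intro j _; exact mul_nonneg hβ0.le (hI0 j)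
      · intro j _; nlinarith [hI0 j, hI1 j]
    have h2 : ∑ j ∈ G.neighborFinset i, β * p.2 j ≤ β * (a * (lam * v i)) := by
      rw [← Finset.mul_sum]
      have h3 : ∑ j ∈ G.neighborFinset i, p.2 j ≤ a * ∑ j ∈ G.neighborFinset i, v j := by
        rw [Finset.mul_sum]
        exact Finset.sum_le_sum fun j _ => hI j
      have h4 : a * ∑ j ∈ G.neighborFinset i, v j ≤ a * (lam * v i) :=
        mul_le_mul_of_nonneg_left (hvA i) ha
      have h5 := mul_le_mul_of_nonneg_left (h3.trans h4) hβ0.le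
      linarith
    linarith
  have hq0 : 0 ≤ 1 - ∏ j ∈ G.neighborFinset i, (1 - β * p.2 j) := by
    have : ∏ j ∈ G.neighborFinset i, (1 - β * p.2 j) ≤ 1 := by
      apply Finset.prod_le_one
      · intro j _; nlinarith [hI0 j, hI1 j]
      · intro j _; nlinarith [hI0 j]
    linarith
  have hmul : (1 - ∏ j ∈ G.neighborFinset i, (1 - β * p.2 j)) * (1 - p.1 i - p.2 i) ≤
      (β * (a * (lam * v i))) * c :=
    mul_le_mul hq (hS i) hS0 (by positivity)
  have h5 : (1 - δ) * p.2 i ≤ (1 - δ) * (a * v i) :=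
    mul_le_mul_of_nonneg_left (hI i) (by linarith)
  have h6 := mul_le_mul_of_nonneg_left hmul (by linarith : (0:ℝ) ≤ 1 - θ)
  nlinarith [h5, h6]

/-- One-step bound for the susceptibles deviation. -/
lemma siv_stepS (hβ0 : 0 < β) (hβ1 : β < 1) (hδ0 : 0 < δ) (hδ1 : δ < 1)
    (hγ0 : 0 < γ) (hγ1 : γ < 1) (hθ0 : 0 < θ) (hθ1 : θ < 1)
    {lam : ℝ} (hlam0 : 0 < lam)
    {v : Fin n → ℝ} (hv1 : ∀ i, 1 ≤ v i)
    (hvA : ∀ i, ∑ j ∈ G.neighborFinset i, v j ≤ lam * v i)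
    {p : (Fin n → ℝ) × (Fin n → ℝ)} {a : ℝ}
    (hp : p ∈ sivD n) (ha : 0 ≤ a)
    (hI : ∀ i, p.2 i ≤ a * v i) :
    ∀ i, |1 - (sivFVD G β δ γ θ p).1 i - (sivFVD G β δ γ θ p).2 i - γ/(γ+θ)| ≤
      |1-γ-θ| * |1 - p.1 i - p.2 i - γ/(γ+θ)| + (γ + (1-θ)*β*lam) * (a * v i) := by
  obtain ⟨⟨hR0p, hR1p⟩, ⟨hI0p, hI1p⟩, hsum⟩ := hp
  have hR0 : ∀ i, (0:ℝ) ≤ p.1 i := fun i => by simpa using hR0p i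
  have hI0 : ∀ i, (0:ℝ) ≤ p.2 i := fun i => by simpa using hI0p i
  have hI1 : ∀ i, p.2 i ≤ 1 := fun i => by simpa using hI1p i
  intro i
  have hvi : (0:ℝ) ≤ v i := le_trans zero_le_one (hv1 i)
  have hba : (0:ℝ) ≤ β * (a * (lam * v i)) :=
    mul_nonneg hβ0.le (mul_nonneg ha (mul_nonneg hlam0.le hvi))
  have hγθ : γ + θ ≠ 0 := by positivity
  set q := 1 - ∏ j ∈ G.neighborFinset i, (1 - β * p.2 j) with hqdef
  set S := 1 - p.1 i - p.2 i with hSdef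
  set E := γ * p.2 i + (1 - θ) * q * S with hEdef
  have hkey : 1 - (sivFVD G β δ γ θ p).1 i - (sivFVD G β δ γ θ p).2 i - γ/(γ+θ) =
      (1-γ-θ) * (1 - p.1 i - p.2 i - γ/(γ+θ)) - E := by
    show 1 - ((1 - γ) * p.1 i + δ * p.2 i + θ * (1 - p.1 i - p.2 i)) -
        ((1 - δ) * p.2 i + (1 - θ) * q * (1 - p.1 i - p.2 i)) - γ/(γ+θ) = _
    rw [hEdef, hSdef]
    field_simp
    ring
  have hS0 : 0 ≤ S := by rw [hSdef]; linarith [hsum i]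
  have hS1 : S ≤ 1 := by rw [hSdef]; linarith [hR0 i, hI0 i]
  have hq0 : 0 ≤ q := by
    rw [hqdef]
    have : ∏ j ∈ G.neighborFinset i, (1 - β * p.2 j) ≤ 1 := by
      apply Finset.prod_le_one
      · intro j _; nlinarith [hI0 j, hI1 j]
      · intro j _; nlinarith [hI0 j]
    linarith
  have hqle : q ≤ β * (a * (lam * v i)) := by
    rw [hqdef]
    have h1 : 1 - ∏ j ∈ G.neighborFinset i, (1 - β * p.2 j) ≤
        ∑ j ∈ G.neighborFinset i, β * p.2 j := by
      apply siv_one_sub_prod_le_sum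
      · intro j _; exact mul_nonneg hβ0.le (hI0 j)
      · intro j _; nlinarith [hI0 j, hI1 j]
    have h3 : ∑ j ∈ G.neighborFinset i, p.2 j ≤ a * ∑ j ∈ G.neighborFinset i, v j := by
      rw [Finset.mul_sum]
      exact Finset.sum_le_sum fun j _ => hI j
    have h4 : a * ∑ j ∈ G.neighborFinset i, v j ≤ a * (lam * v i) :=
      mul_le_mul_of_nonneg_left (hvA i) ha
    rw [← Finset.mul_sum] at h1
    have h5 := mul_le_mul_of_nonneg_left (h3.trans h4) hβ0.le
    linarith
  have hE0 : 0 ≤ E := by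
    rw [hEdef]
    have e1 : (0:ℝ) ≤ γ * p.2 i := mul_nonneg hγ0.le (hI0 i)
    have e2 : (0:ℝ) ≤ (1 - θ) * q * S := mul_nonneg (mul_nonneg (by linarith) hq0) hS0
    linarith
  have hE1 : E ≤ (γ + (1-θ)*β*lam) * (a * v i) := by
    rw [hEdef]
    have h1 : γ * p.2 i ≤ γ * (a * v i) := mul_le_mul_of_nonneg_left (hI i) (by linarith)
    have h2 : (1 - θ) * q * S ≤ (1 - θ) * (β * (a * (lam * v i))) := by
      have hq2 : q * S ≤ (β * (a * (lam * v i))) * 1 :=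
        mul_le_mul hqle hS1 hS0 hba
      nlinarith
    nlinarith
  rw [hkey]
  calc |(1-γ-θ) * (1 - p.1 i - p.2 i - γ/(γ+θ)) - E|
      ≤ |(1-γ-θ) * (1 - p.1 i - p.2 i - γ/(γ+θ))| + |E| := abs_sub _ _
    _ = |1-γ-θ| * |1 - p.1 i - p.2 i - γ/(γ+θ)| + E := by
        rw [abs_mul, abs_of_nonneg hE0]
    _ ≤ _ := by linarith

/-- Exact affine recursion for the recovered/vaccinated component. -/
lemma siv_stepR (hγ0 : 0 < γ) (hθ0 : 0 < θ) (p : (Fin n → ℝ) × (Fin n → ℝ)) (i : Fin n) :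
    (sivFVD G β δ γ θ p).1 i - θ/(γ+θ) =
      (1-γ-θ) * (p.1 i - θ/(γ+θ)) + (δ-θ) * p.2 i := by
  have hγθ : γ + θ ≠ 0 := by positivity
  show (1 - γ) * p.1 i + δ * p.2 i + θ * (1 - p.1 i - p.2 i) - θ/(γ+θ) = _
  field_simp
  ring

/-- Master convergence lemma: if the iterates remain in `D` and the infected component
decays geometrically, the iterates converge to the disease-free point. -/
lemma siv_master (hβ0 : 0 < β) (hβ1 : β < 1) (hδ0 : 0 < δ) (hδ1 : δ < 1)
    (hγ0 : 0 < γ) (hγ1 : γ < 1) (hθ0 : 0 < θ) (hθ1 : θ < 1)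
    {p : (Fin n → ℝ) × (Fin n → ℝ)} {C μ : ℝ}
    (hC : 0 ≤ C) (hμ0 : 0 < μ) (hμ1 : μ < 1)
    (hD : ∀ t, (sivFVD G β δ γ θ)^[t] p ∈ sivD n)
    (hdec : ∀ t i, ((sivFVD G β δ γ θ)^[t] p).2 i ≤ C * μ^t) :
    Filter.Tendsto (fun t => (sivFVD G β δ γ θ)^[t] p) Filter.atTop
      (nhds (sivDFP n γ θ)) := by
  set F := sivFVD G β δ γ θ with hF
  set r := θ/(γ+θ) with hr
  have hγθ : 0 < γ + θ := by positivity
  have hr0 : 0 ≤ r := by positivity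
  have hr1 : r ≤ 1 := by
    rw [hr, div_le_one hγθ]; linarith
  set κ := |1-γ-θ| with hκ
  have hκ1 : κ < 1 := by
    rw [hκ, abs_lt]; constructor <;> linarith
  have hκ0 : 0 ≤ κ := abs_nonneg _
  set ρ := max κ μ with hρ
  have hρ1 : ρ < 1 := max_lt hκ1 hμ1
  have hρ0 : 0 < ρ := lt_of_lt_of_le hμ0 (le_max_right _ _)
  set D := |δ-θ| * C / ρ with hD2
  have hD20 : 0 ≤ D := by positivity
  have hRbound : ∀ t i, |((F)^[t] p).1 i - r| ≤ (2 + D * t) * ρ^t := by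
    intro t
    induction t with
    | zero =>
      intro i
      simp only [Function.iterate_zero_apply, Nat.cast_zero, mul_zero, add_zero, pow_zero,
        mul_one]
      have h0 := (hD 0).1
      rw [Function.iterate_zero_apply] at h0
      obtain ⟨h1, h2⟩ := h0
      have := h1 i; have := h2 i
      rw [abs_le]
      constructor <;> [skip; skip] <;> simp only [Pi.zero_apply, Pi.one_apply] at * <;> linarith
    | succ t ih =>
      intro i
      rw [Function.iterate_succ_apply']
      have hid := siv_stepR (β := β) (δ := δ) G hγ0 hθ0 ((F)^[t] p) i
      rw [hF] at hid ⊢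
      rw [hid]
      have hIt : |((sivFVD G β δ γ θ)^[t] p).2 i| ≤ C * μ^t := by
        have h0 := (hD t).2.1
        obtain ⟨h1, h2⟩ := h0
        have ha := h1 i
        simp only [Pi.zero_apply] at ha
        rw [abs_of_nonneg ha]
        exact hdec t i
      calc |(1-γ-θ) * (((sivFVD G β δ γ θ)^[t] p).1 i - r) +
            (δ-θ) * ((sivFVD G β δ γ θ)^[t] p).2 i|
          ≤ |(1-γ-θ) * (((sivFVD G β δ γ θ)^[t] p).1 i - r)| +
            |(δ-θ) * ((sivFVD G β δ γ θ)^[t] p).2 i| := abs_add_le _ _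
        _ = κ * |((sivFVD G β δ γ θ)^[t] p).1 i - r| +
            |δ-θ| * |((sivFVD G β δ γ θ)^[t] p).2 i| := by
            rw [abs_mul, abs_mul, hκ]
        _ ≤ ρ * ((2 + D * t) * ρ^t) + |δ-θ| * (C * μ^t) := by
            have h1 : κ * |((sivFVD G β δ γ θ)^[t] p).1 i - r| ≤ ρ * ((2 + D * t) * ρ^t) := by
              have hb := ih i
              have hnn : 0 ≤ |((sivFVD G β δ γ θ)^[t] p).1 i - r| := abs_nonneg _
              have hκρ : κ ≤ ρ := le_max_left _ _
              nlinarith [pow_nonneg hρ0.le t, hb]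
            have h2 : |δ-θ| * |((sivFVD G β δ γ θ)^[t] p).2 i| ≤ |δ-θ| * (C * μ^t) :=
              mul_le_mul_of_nonneg_left hIt (abs_nonneg _)
            linarith
        _ ≤ (2 + D * (t+1)) * ρ^(t+1) := by
            have hμρ : μ^t ≤ ρ^t := pow_le_pow_left₀ hμ0.le (le_max_right _ _) t
            have h3 : |δ-θ| * (C * μ^t) ≤ |δ-θ| * C * ρ^t :=  by
              have h3' := mul_le_mul_of_nonneg_left hμρ
                (mul_nonneg (abs_nonneg (δ-θ)) hC)
              calc |δ-θ| * (C * μ^t) = |δ-θ| * C * μ^t := by ring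
                _ ≤ |δ-θ| * C * ρ^t := h3'
            have h4 : |δ-θ| * C * ρ^t = D * ρ^(t+1) := by
              rw [hD2, pow_succ]
              field_simp
            have h5 : ρ * ((2 + D * t) * ρ^t) = (2 + D * t) * ρ^(t+1) := by
              rw [pow_succ]; ring
            have h6 : (2 + D * t) * ρ^(t+1) + D * ρ^(t+1) = (2 + D * (t+1)) * ρ^(t+1) := by
              push_cast
              ring
            linarith
        _ = (2 + D * ((t:ℝ)+1)) * ρ^(t+1) := rfl
        _ = (2 + D * ((t+1 : ℕ):ℝ)) * ρ^(t+1) := by push_cast; ring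
  have hI_t : ∀ i, Filter.Tendsto (fun t => ((F)^[t] p).2 i) Filter.atTop (nhds 0) := by
    intro i
    apply squeeze_zero (fun t => ?_) (fun t => hdec t i)
    · simpa using (tendsto_pow_atTop_nhds_zero_of_lt_one hμ0.le hμ1).const_mul C
    · have h0 := (hD t).2.1.1
      have := h0 i
      simpa using this
  have hR_t : ∀ i, Filter.Tendsto (fun t => ((F)^[t] p).1 i) Filter.atTop (nhds r) := by
    intro i
    rw [tendsto_iff_dist_tendsto_zero]
    simp only [Real.dist_eq]
    apply squeeze_zero (fun t => abs_nonneg _) (fun t => hRbound t i)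
    have hlim : Filter.Tendsto (fun t : ℕ => 2 * ρ^t + D * (t * ρ^t)) Filter.atTop
        (nhds 0) := by
      have h1 : Filter.Tendsto (fun t : ℕ => 2 * ρ^t) Filter.atTop (nhds 0) := by
        simpa using (tendsto_pow_atTop_nhds_zero_of_lt_one hρ0.le hρ1).const_mul (2:ℝ)
      have h2 : Filter.Tendsto (fun t : ℕ => D * (t * ρ^t)) Filter.atTop (nhds 0) := by
        simpa using (tendsto_self_mul_const_pow_of_lt_one hρ0.le hρ1).const_mul D
      simpa using h1.add h2
    have heq : (fun t : ℕ => (2 + D * t) * ρ^t) = fun t : ℕ => 2 * ρ^t + D * (t * ρ^t) := by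
      funext t; ring
    rw [heq]
    exact hlim
  have hfinal : Filter.Tendsto (fun t => (((F)^[t] p).1, ((F)^[t] p).2)) Filter.atTop
      (nhds ((fun _ => r), (fun _ => (0:ℝ)))) :=
    Filter.Tendsto.prodMk_nhds (tendsto_pi_nhds.mpr hR_t) (tendsto_pi_nhds.mpr hI_t)
  simpa [sivDFP, hr] using hfinal

end Dynamics

set_option maxHeartbeats 2000000 in
/-- `((θ/(γ+θ))1, 0)` is a fixed point of `F_VD`; it is locally stable in `D`
if `(1−θ)(γ/(γ+θ))(β/δ)λmax(A) < 1`, and globally stable on `D` if `(1−θ)(β/δ)λmax(A) < 1`. -/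
theorem stmt18 {n : ℕ} (hn : 1 ≤ n) (G : SimpleGraph (Fin n)) [DecidableRel G.Adj]
    (hG : G.Connected) (β δ γ θ : ℝ) (hβ : β ∈ Set.Ioo (0 : ℝ) 1)
    (hδ : δ ∈ Set.Ioo (0 : ℝ) 1) (hγ : γ ∈ Set.Ioo (0 : ℝ) 1) (hθ : θ ∈ Set.Ioo (0 : ℝ) 1) :
    sivFVD G β δ γ θ (sivDFP n γ θ) = sivDFP n γ θ ∧
    ((1 - θ) * (γ / (γ + θ)) * (β / δ) * lamMax (G.adjMatrix ℝ) < 1 →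
      ∃ V : Set ((Fin n → ℝ) × (Fin n → ℝ)), IsOpen V ∧ sivDFP n γ θ ∈ V ∧
        ∀ p ∈ V ∩ sivD n,
          Filter.Tendsto (fun t => (sivFVD G β δ γ θ)^[t] p) Filter.atTop
            (nhds (sivDFP n γ θ))) ∧
    ((1 - θ) * (β / δ) * lamMax (G.adjMatrix ℝ) < 1 →
      ∀ p ∈ sivD n,
        Filter.Tendsto (fun t => (sivFVD G β δ γ θ)^[t] p) Filter.atTop
          (nhds (sivDFP n γ θ))) := by
  obtain ⟨hβ0, hβ1⟩ := hβ
  obtain ⟨hδ0, hδ1⟩ := hδ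
  obtain ⟨hγ0, hγ1⟩ := hγ
  obtain ⟨hθ0, hθ1⟩ := hθ
  have hγθ : (0:ℝ) < γ + θ := by linarith
  set L := lamMax (G.adjMatrix ℝ) with hL
  have hL0 : 0 ≤ L := siv_lamMax_nonneg G hn
  refine ⟨?_, ?_, ?_⟩
  · -- fixed point
    unfold sivFVD sivDFP
    refine Prod.ext ?_ ?_
    · funext i
      simp only
      field_simp
      ring
    · funext i
      simp only
      simp
  · -- local stability
    intro hloc
    set s := γ/(γ+θ) with hs
    have hs0 : 0 < s := by positivity
    have hs1 : s < 1 := by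
      rw [hs, div_lt_one hγθ]; linarith
    have hden : (0:ℝ) < (1-θ)*β*s := by
      apply mul_pos (mul_pos (by linarith) hβ0) hs0
    have hLlt : L < δ/((1-θ)*β*s) := by
      rw [lt_div_iff₀ hden]
      have h1 := mul_lt_mul_of_pos_right hloc hδ0
      rw [one_mul] at h1
      calc L * ((1-θ)*β*s) = ((1-θ) * s * (β/δ) * L) * δ := by
            field_simp
        _ < δ := by
            have : (1-θ) * s * (β/δ) * L = (1-θ) * (γ/(γ+θ)) * (β/δ) * L := by rw [hs]
            rw [this]; exact h1
    set lam := (L + δ/((1-θ)*β*s))/2 with hlam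
    have hlamL : L < lam := by rw [hlam]; linarith
    have hlam0 : 0 < lam := lt_of_le_of_lt hL0 hlamL
    have hlamlt : lam < δ/((1-θ)*β*s) := by rw [hlam]; linarith
    have hlams : (1-θ)*β*lam*s < δ := by
      rw [lt_div_iff₀ hden] at hlamlt
      nlinarith
    have hden2 : (0:ℝ) < (1-θ)*β*lam := by
      apply mul_pos (mul_pos (by linarith) hβ0) hlam0
    have hsX : s < δ/((1-θ)*β*lam) := by
      rw [lt_div_iff₀ hden2]
      nlinarith
    set d := (δ/((1-θ)*β*lam) - s)/2 with hd
    have hd0 : 0 < d := by rw [hd]; linarith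
    have hcX : s + d < δ/((1-θ)*β*lam) := by rw [hd]; linarith
    set μ := (1-δ) + (1-θ)*β*lam*(s+d) with hμ
    have hμ1 : μ < 1 := by
      have h2 : (1-θ)*β*lam*(s+d) < (1-θ)*β*lam*(δ/((1-θ)*β*lam)) :=
        mul_lt_mul_of_pos_left hcX hden2
      have h3 : (1-θ)*β*lam*(δ/((1-θ)*β*lam)) = δ := by
        field_simp
      rw [hμ]; rw [h3] at h2; linarith
    have hμ0 : 0 < μ := by
      have h4 : 0 ≤ (1-θ)*β*lam*(s+d) :=
        mul_nonneg hden2.le (by linarith)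
      rw [hμ]; linarith
    obtain ⟨v, hv1, hvA⟩ := siv_exists_v G hn hlamL
    set κ := |1-γ-θ| with hκ
    have hκ1 : κ < 1 := by
      rw [hκ, abs_lt]; constructor <;> linarith
    have hκ0 : 0 ≤ κ := abs_nonneg _
    set Vm := ∑ j, v j with hVm
    have hvnn : ∀ i, (0:ℝ) ≤ v i := fun i => le_trans zero_le_one (hv1 i)
    have hvle : ∀ i, v i ≤ Vm := fun i =>
      Finset.single_le_sum (fun j _ => hvnn j) (Finset.mem_univ i)
    have hVm1 : (1:ℝ) ≤ Vm := le_trans (hv1 ⟨0, hn⟩) (hvle ⟨0, hn⟩)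
    set Cw := (γ + (1-θ)*β*lam) * Vm with hCw
    have hCw0 : 0 < Cw := by
      apply mul_pos _ (by linarith)
      have : 0 < (1-θ)*β*lam := hden2
      linarith
    set a0 := (1-κ)*d/Cw with ha0
    have ha00 : 0 < a0 := by
      apply div_pos (mul_pos (by linarith) hd0) hCw0
    have hCwa0 : Cw * a0 = (1-κ)*d := by
      rw [ha0]; field_simp
    refine ⟨{q : (Fin n → ℝ) × (Fin n → ℝ) |
      ∀ i, |1 - q.1 i - q.2 i - γ/(γ+θ)| < d ∧ q.2 i < a0}, ?_, ?_, ?_⟩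
    · -- openness
      have hVeq : {q : (Fin n → ℝ) × (Fin n → ℝ) |
          ∀ i, |1 - q.1 i - q.2 i - γ/(γ+θ)| < d ∧ q.2 i < a0} =
          ⋂ i, ((fun q : (Fin n → ℝ) × (Fin n → ℝ) =>
            |1 - q.1 i - q.2 i - γ/(γ+θ)|) ⁻¹' Set.Iio d ∩
            (fun q : (Fin n → ℝ) × (Fin n → ℝ) => q.2 i) ⁻¹' Set.Iio a0) := by
        ext q
        simp [Set.mem_iInter, Set.mem_preimage, Set.mem_Iio, forall_and]
      rw [hVeq]
      apply isOpen_iInter_of_finite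
      intro i
      apply IsOpen.inter
      · apply IsOpen.preimage _ isOpen_Iio
        exact (((continuous_const.sub
          ((continuous_apply i).comp continuous_fst)).sub
          ((continuous_apply i).comp continuous_snd)).sub continuous_const).abs
      · exact IsOpen.preimage ((continuous_apply i).comp continuous_snd) isOpen_Iio
    · -- fp in V
      intro i
      constructor
      · have hz : 1 - (sivDFP n γ θ).1 i - (sivDFP n γ θ).2 i - γ/(γ+θ) = 0 := by
          show 1 - θ/(γ+θ) - 0 - γ/(γ+θ) = 0
          field_simp
          ring
        rw [hz, abs_zero]; exact hd0
      · show (0:ℝ) < a0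
        exact ha00
    · -- convergence on V ∩ D
      rintro p ⟨hpV, hpD⟩
      have key : ∀ t, ((sivFVD G β δ γ θ)^[t] p ∈ sivD n) ∧
          (∀ i, ((sivFVD G β δ γ θ)^[t] p).2 i ≤ a0 * μ^t * v i) ∧
          (∀ i, |1 - ((sivFVD G β δ γ θ)^[t] p).1 i -
            ((sivFVD G β δ γ θ)^[t] p).2 i - γ/(γ+θ)| ≤ d) := by
        intro t
        induction t with
        | zero =>
          refine ⟨by simpa using hpD, fun i => ?_, fun i => ?_⟩
          · simp only [Function.iterate_zero_apply, pow_zero, mul_one]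
            have h1 := (hpV i).2
            have h2 : a0 ≤ a0 * v i := le_mul_of_one_le_right ha00.le (hv1 i)
            linarith
          · simp only [Function.iterate_zero_apply]
            exact (hpV i).1.le
        | succ t ih =>
          obtain ⟨ihD, ihI, ihS⟩ := ih
          have hSle : ∀ i, 1 - ((sivFVD G β δ γ θ)^[t] p).1 i -
              ((sivFVD G β δ γ θ)^[t] p).2 i ≤ s + d := by
            intro i
            have := (abs_le.mp (ihS i)).2
            rw [hs]; linarith
          have hanneg : (0:ℝ) ≤ a0 * μ^t := mul_nonneg ha00.le (pow_nonneg hμ0.le t)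
          have hstep := siv_stepI (γ := γ) G hβ0 hβ1 hδ0 hδ1 hθ0 hθ1
            (by linarith : (0:ℝ) ≤ s + d) hlam0 hv1 hvA ihD hanneg hSle ihI
          have hstepS := siv_stepS G hβ0 hβ1 hδ0 hδ1 hγ0 hγ1 hθ0 hθ1 hlam0 hv1 hvA
            ihD hanneg ihI
          refine ⟨?_, fun i => ?_, fun i => ?_⟩
          · rw [Function.iterate_succ_apply']
            exact siv_mem_D_invariant G hβ0 hβ1 hδ0 hδ1 hγ0 hγ1 hθ0 hθ1 ihD
          · rw [Function.iterate_succ_apply']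
            have h1 := hstep i
            have h2 : ((1-δ) + (1-θ)*β*lam*(s+d)) * (a0 * μ^t * v i) =
                a0 * μ^(t+1) * v i := by
              rw [hμ, pow_succ]; ring
            rw [← h2]
            calc (sivFVD G β δ γ θ ((sivFVD G β δ γ θ)^[t] p)).2 i
                ≤ ((1-δ) + (1-θ)*β*lam*(s+d)) * ((a0 * μ^t) * v i) := h1
              _ = ((1-δ) + (1-θ)*β*lam*(s+d)) * (a0 * μ^t * v i) := by ring
          · rw [Function.iterate_succ_apply']
            have h1 := hstepS i
            have h2 : (γ + (1-θ)*β*lam) * (a0 * μ^t * v i) ≤ (1-κ)*d := by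
              have hμt1 : μ^t ≤ 1 := pow_le_one₀ hμ0.le hμ1.le
              have h3 : a0 * μ^t * v i ≤ a0 * Vm := by
                have h4 : a0 * μ^t ≤ a0 := by nlinarith
                have := hvle i
                nlinarith [hvnn i]
              have h5 : (γ + (1-θ)*β*lam) * (a0 * μ^t * v i) ≤
                  (γ + (1-θ)*β*lam) * (a0 * Vm) := by
                apply mul_le_mul_of_nonneg_left h3
                have := hden2
                linarith
              calc (γ + (1-θ)*β*lam) * (a0 * μ^t * v i)
                  ≤ (γ + (1-θ)*β*lam) * (a0 * Vm) := h5
                _ = Cw * a0 := by rw [hCw]; ring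
                _ = (1-κ)*d := hCwa0
            have h6 : κ * |1 - ((sivFVD G β δ γ θ)^[t] p).1 i -
                ((sivFVD G β δ γ θ)^[t] p).2 i - γ/(γ+θ)| ≤ κ * d :=
              mul_le_mul_of_nonneg_left (ihS i) hκ0
            calc |1 - (sivFVD G β δ γ θ ((sivFVD G β δ γ θ)^[t] p)).1 i -
                (sivFVD G β δ γ θ ((sivFVD G β δ γ θ)^[t] p)).2 i - γ/(γ+θ)|
                ≤ κ * |1 - ((sivFVD G β δ γ θ)^[t] p).1 i -
                  ((sivFVD G β δ γ θ)^[t] p).2 i - γ/(γ+θ)| +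
                  (γ + (1-θ)*β*lam) * ((a0 * μ^t) * v i) := by
                  have := h1
                  rw [hκ]
                  convert this using 3 <;> ring
              _ ≤ κ * d + (1-κ)*d := by
                  have h2' : (γ + (1-θ)*β*lam) * ((a0 * μ^t) * v i) ≤ (1-κ)*d := by
                    calc (γ + (1-θ)*β*lam) * ((a0 * μ^t) * v i)
                        = (γ + (1-θ)*β*lam) * (a0 * μ^t * v i) := by ring
                      _ ≤ (1-κ)*d := h2
                  linarith [h6]
              _ = d := by ring
      apply siv_master G hβ0 hβ1 hδ0 hδ1 hγ0 hγ1 hθ0 hθ1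
        (C := a0 * Vm) (μ := μ)
        (mul_nonneg ha00.le (by linarith)) hμ0 hμ1 (fun t => (key t).1)
      intro t i
      have h1 := (key t).2.1 i
      have h2 : a0 * μ^t * v i ≤ a0 * Vm * μ^t := by
        have hμt : (0:ℝ) ≤ μ^t := pow_nonneg hμ0.le t
        have h3 := mul_le_mul_of_nonneg_left (hvle i) (mul_nonneg ha00.le hμt)
        calc a0 * μ^t * v i = a0 * μ^t * v i := rfl
          _ ≤ a0 * μ^t * Vm := h3
          _ = a0 * Vm * μ^t := by ring
      linarith
  · -- global stability
    intro hglob p hp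
    have hden : (0:ℝ) < (1-θ)*β := mul_pos (by linarith) hβ0
    have hLlt : L < δ/((1-θ)*β) := by
      rw [lt_div_iff₀ hden]
      have h1 := mul_lt_mul_of_pos_right hglob hδ0
      rw [one_mul] at h1
      calc L * ((1-θ)*β) = ((1-θ) * (β/δ) * L) * δ := by field_simp
        _ < δ := h1
    set lam := (L + δ/((1-θ)*β))/2 with hlam
    have hlamL : L < lam := by rw [hlam]; linarith
    have hlam0 : 0 < lam := lt_of_le_of_lt hL0 hlamL
    have hlamlt : lam < δ/((1-θ)*β) := by rw [hlam]; linarith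
    have hlams : (1-θ)*β*lam < δ := by
      rw [lt_div_iff₀ hden] at hlamlt
      nlinarith
    set μ := (1-δ) + (1-θ)*β*lam*1 with hμ
    have hμ1 : μ < 1 := by rw [hμ]; linarith
    have hμ0 : 0 < μ := by
      have h4 : 0 ≤ (1-θ)*β*lam*1 := by
        have := mul_pos hden hlam0
        nlinarith
      rw [hμ]; linarith
    obtain ⟨v, hv1, hvA⟩ := siv_exists_v G hn hlamL
    set Vm := ∑ j, v j with hVm
    have hvnn : ∀ i, (0:ℝ) ≤ v i := fun i => le_trans zero_le_one (hv1 i)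
    have hvle : ∀ i, v i ≤ Vm := fun i =>
      Finset.single_le_sum (fun j _ => hvnn j) (Finset.mem_univ i)
    have hVm0 : (0:ℝ) ≤ Vm := Finset.sum_nonneg fun j _ => hvnn j
    have key : ∀ t, ((sivFVD G β δ γ θ)^[t] p ∈ sivD n) ∧
        (∀ i, ((sivFVD G β δ γ θ)^[t] p).2 i ≤ μ^t * v i) := by
      intro t
      induction t with
      | zero =>
        refine ⟨by simpa using hp, fun i => ?_⟩
        simp only [Function.iterate_zero_apply, pow_zero, one_mul]
        obtain ⟨_, ⟨_, hI1⟩, _⟩ := hp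
        have := hI1 i
        have h2 : p.2 i ≤ 1 := by simpa using this
        linarith [hv1 i]
      | succ t ih =>
        obtain ⟨ihD, ihI⟩ := ih
        have hSle : ∀ i, 1 - ((sivFVD G β δ γ θ)^[t] p).1 i -
            ((sivFVD G β δ γ θ)^[t] p).2 i ≤ 1 := by
          intro i
          obtain ⟨⟨hR0, _⟩, ⟨hI0, _⟩, _⟩ := ihD
          have h1 : (0:ℝ) ≤ ((sivFVD G β δ γ θ)^[t] p).1 i := by simpa using hR0 i
          have h2 : (0:ℝ) ≤ ((sivFVD G β δ γ θ)^[t] p).2 i := by simpa using hI0 i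
          linarith
        have hstep := siv_stepI (γ := γ) G hβ0 hβ1 hδ0 hδ1 hθ0 hθ1
          (by norm_num : (0:ℝ) ≤ 1) hlam0 hv1 hvA ihD (pow_nonneg hμ0.le t) hSle ihI
        refine ⟨?_, fun i => ?_⟩
        · rw [Function.iterate_succ_apply']
          exact siv_mem_D_invariant G hβ0 hβ1 hδ0 hδ1 hγ0 hγ1 hθ0 hθ1 ihD
        · rw [Function.iterate_succ_apply']
          have h1 := hstep i
          have h2 : ((1-δ) + (1-θ)*β*lam*1) * (μ^t * v i) = μ^(t+1) * v i := by
            rw [hμ, pow_succ]; ring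
          rw [← h2]
          exact h1
    apply siv_master G hβ0 hβ1 hδ0 hδ1 hγ0 hγ1 hθ0 hθ1
      (C := Vm) (μ := μ) hVm0 hμ0 hμ1 (fun t => (key t).1)
    intro t i
    have h1 := (key t).2 i
    have h2 : μ^t * v i ≤ Vm * μ^t := by
      have hμt : (0:ℝ) ≤ μ^t := pow_nonneg hμ0.le t
      have h3 := mul_le_mul_of_nonneg_left (hvle i) hμt
      calc μ^t * v i ≤ μ^t * Vm := h3
        _ = Vm * μ^t := by ring
    linarith
end
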